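/- arXiv:1409.4752 — 4 statements merged into one kernel-verified Lean document; each statement's English description precedes it below -/
import Mathlib

section
/- Let X and Y be finite alphabets and let ε ∈ (0,1). For all joint probability distributions P and Q on X×Y with total variation distance ‖P−Q‖ = ∑_{x∈X}∑_{y∈Y} |P(x,y)−Q(x,y)| ≤ ε, it holds that |H(Y|X‖P) − H(Y|X‖Q)| ≤ 2ε·log|Y| + 2H₂(ε). -/
open Real Finset

/-- Binary entropy function (base 2). -/
noncomputable def H2 (ε : ℝ) : ℝ :=
  -(ε * Real.logb 2 ε) - (1 - ε) * Real.logb 2 (1 - ε)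

/-- `p` is a probability distribution on the finite alphabet `α`. -/
def IsProb {α : Type*} [Fintype α] (p : α → ℝ) : Prop :=
  (∀ a, 0 ≤ p a) ∧ ∑ a, p a = 1

/-- `W` is a channel (stochastic matrix) from `X` to `Y`. -/
def IsChannel {X Y : Type*} [Fintype Y] (W : X → Y → ℝ) : Prop :=
  ∀ x, (∀ y, 0 ≤ W x y) ∧ ∑ y, W x y = 1

/-- Conditional entropy `H(Y|X‖P)` (base 2) of a joint distribution `P` on `X × Y`. -/
noncomputable def condEnt {X Y : Type*} [Fintype X] [Fintype Y] (P : X × Y → ℝ) : ℝ :=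
  -∑ x : X, ∑ y : Y, P (x, y) * Real.logb 2 (P (x, y) / ∑ y' : Y, P (x, y'))

/-- Mutual information `I(U;Y‖P)` (base 2) of a joint distribution `P` on `U × Y`. -/
noncomputable def mutInf {U Y : Type*} [Fintype U] [Fintype Y] (P : U × Y → ℝ) : ℝ :=
  ∑ u : U, ∑ y : Y,
    P (u, y) * Real.logb 2 (P (u, y) / ((∑ y' : Y, P (u, y')) * ∑ u' : U, P (u', y)))

/-- Channel distance `d(W,W') = max_x ∑_y |W(y|x) − W'(y|x)|`. -/
noncomputable def dChan {X Y : Type*} [Fintype Y] (W W' : X → Y → ℝ) : ℝ :=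
  ⨆ x : X, ∑ y : Y, |W x y - W' x y|


set_option linter.unusedSectionVars false

section Aux
variable {X Y : Type*} [Fintype X] [Fintype Y]

/-- `Fent a s = a * log (s/a)`. -/
noncomputable def Fent (a s : ℝ) : ℝ := a * Real.log (s / a)

@[simp] lemma Fent_zero (s : ℝ) : Fent 0 s = 0 := by simp [Fent]

lemma Fent_nonneg {a s : ℝ} (ha : 0 ≤ a) (has : a ≤ s) : 0 ≤ Fent a s := by
  rcases eq_or_lt_of_le ha with h | h
  · simp [← h]
  · exact mul_nonneg ha (Real.log_nonneg ((one_le_div h).mpr has))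

/-- generalized log-sum / superadditivity of `Fent`. -/
lemma Fent_sum_le {ι : Type*} (t : Finset ι) (b c : ι → ℝ)
    (hb : ∀ i ∈ t, 0 ≤ b i) (hbc : ∀ i ∈ t, b i ≤ c i) :
    ∑ i ∈ t, Fent (b i) (c i) ≤ Fent (∑ i ∈ t, b i) (∑ i ∈ t, c i) := by
  set B := ∑ i ∈ t, b i with hB
  set C := ∑ i ∈ t, c i with hC
  rcases eq_or_lt_of_le (Finset.sum_nonneg hb) with h0 | h0
  · have : ∀ i ∈ t, b i = 0 := by
      intro i hi
      exact le_antisymm (by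
        have := (Finset.sum_eq_zero_iff_of_nonneg hb).1 h0.symm
        exact le_of_eq (this i hi)) (hb i hi)
    have hB0 : B = 0 := by rw [hB, ← h0]
    rw [hB0]
    calc ∑ i ∈ t, Fent (b i) (c i) = 0 := by
            apply Finset.sum_eq_zero; intro i hi; rw [this i hi]; simp
      _ ≤ Fent 0 C := by simp
  · have hBC : B ≤ C := Finset.sum_le_sum hbc
    have hCpos : 0 < C := lt_of_lt_of_le h0 hBC
    have key : ∀ i ∈ t, Fent (b i) (c i) ≤ b i * Real.log (C / B) + B / C * c i - b i := by
      intro i hi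
      rcases eq_or_lt_of_le (hb i hi) with h | h
      · have hci : 0 ≤ c i := h ▸ hbc i hi
        rw [← h]; simp
        exact mul_nonneg (by positivity) hci
      · have hci : 0 < c i := lt_of_lt_of_le h (hbc i hi)
        have harg : 0 < (c i / b i) / (C / B) := by positivity
        have hlog := Real.log_le_sub_one_of_pos harg
        have hlogd : Real.log ((c i / b i) / (C / B)) =
            Real.log (c i / b i) - Real.log (C / B) :=
          Real.log_div (by positivity) (by positivity)
        rw [hlogd] at hlog
        have : Fent (b i) (c i) - b i * Real.log (C / B)
            ≤ b i * ((c i / b i) / (C / B) - 1) := by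
          rw [Fent, ← mul_sub]
          exact mul_le_mul_of_nonneg_left hlog (le_of_lt h)
        have heq : b i * ((c i / b i) / (C / B) - 1) = B / C * c i - b i := by
          field_simp
        linarith [heq ▸ this]
    calc ∑ i ∈ t, Fent (b i) (c i)
        ≤ ∑ i ∈ t, (b i * Real.log (C / B) + B / C * c i - b i) :=
          Finset.sum_le_sum key
      _ = B * Real.log (C / B) + B / C * C - B := by
          rw [Finset.sum_sub_distrib, Finset.sum_add_distrib, ← Finset.sum_mul,
            ← Finset.mul_sum]
      _ = Fent B C := by
          rw [Fent]; field_simp; ring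

/-- two-term superadditivity. -/
lemma Fent_superadd {b1 b2 c1 c2 : ℝ} (h1 : 0 ≤ b1) (h2 : 0 ≤ b2)
    (hc1 : b1 ≤ c1) (hc2 : b2 ≤ c2) :
    Fent b1 c1 + Fent b2 c2 ≤ Fent (b1 + b2) (c1 + c2) := by
  have := Fent_sum_le (Finset.univ : Finset (Fin 2)) ![b1, b2] ![c1, c2]
    (by intro i _; fin_cases i <;> simpa) (by intro i _; fin_cases i <;> simpa)
  simpa [Fin.sum_univ_two] using this

/-- pointwise almost-convexity bound. -/
lemma Fent_add_le {b1 b2 c1 c2 : ℝ} (h1 : 0 ≤ b1) (h2 : 0 ≤ b2)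
    (hc1 : b1 ≤ c1) (hc2 : b2 ≤ c2) :
    Fent (b1 + b2) (c1 + c2) ≤ Fent b1 c1 + Fent b2 c2
      + b1 * Real.log ((c1 + c2) / c1) + b2 * Real.log ((c1 + c2) / c2) := by
  rcases eq_or_lt_of_le (add_nonneg h1 h2) with h0 | h0
  · have hb1 : b1 = 0 := by linarith
    have hb2 : b2 = 0 := by linarith
    rw [hb1, hb2]
    simp [Fent_zero]
  · have hs : 0 < c1 + c2 := lt_of_lt_of_le h0 (add_le_add hc1 hc2)
    set a := b1 + b2 with ha
    set s := c1 + c2 with hsdef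
    have key : ∀ b c : ℝ, 0 ≤ b → b ≤ c → b ≤ a →
        b * Real.log (s / a) ≤ Fent b c + b * Real.log (s / c) := by
      intro b c hbn hbc hba
      rcases eq_or_lt_of_le hbn with h | h
      · rw [← h]; simp [Fent_zero]
      · have hc : 0 < c := lt_of_lt_of_le h hbc
        have hcomb : Real.log (c / b) + Real.log (s / c) = Real.log (s / b) := by
          rw [← Real.log_mul (by positivity) (by positivity)]
          congr 1
          field_simp
        have hmono : Real.log (s / a) ≤ Real.log (s / b) :=
          Real.log_le_log (by positivity)
            (div_le_div_of_nonneg_left (le_of_lt hs) h hba)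
        calc b * Real.log (s / a) ≤ b * Real.log (s / b) :=
              mul_le_mul_of_nonneg_left hmono hbn
          _ = Fent b c + b * Real.log (s / c) := by
              rw [Fent, ← mul_add, hcomb]
    have k1 := key b1 c1 h1 hc1 (by linarith)
    have k2 := key b2 c2 h2 hc2 (by linarith)
    have : Fent a s = b1 * Real.log (s / a) + b2 * Real.log (s / a) := by
      rw [Fent, ha, add_mul]
    linarith

/-- per-term bound for the `log |Y|` cap. -/
lemma Fent_le_card {b c : ℝ} (n : ℕ) (hn : 1 ≤ n) (hb : 0 ≤ b) (hbc : b ≤ c) :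
    Fent b c ≤ c / n - b + b * Real.log n := by
  have hn0 : (0:ℝ) < n := by exact_mod_cast hn
  rcases eq_or_lt_of_le hb with h | h
  · have hc0 : 0 ≤ c := h ▸ hbc
    rw [← h]; simp [Fent_zero]
    positivity
  · have hc : 0 < c := lt_of_lt_of_le h hbc
    have harg : (0:ℝ) < c / (b * n) := by positivity
    have hlog := Real.log_le_sub_one_of_pos harg
    have hsplit : Real.log (c / b) = Real.log (c / (b * n)) + Real.log n := by
      rw [← Real.log_mul (by positivity) (by positivity)]
      congr 1
      field_simp
    have : Fent b c = b * Real.log (c / (b * n)) + b * Real.log n := by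
      rw [Fent, hsplit, mul_add]
    rw [this]
    have : b * Real.log (c / (b * n)) ≤ b * (c / (b * n) - 1) :=
      mul_le_mul_of_nonneg_left hlog hb
    have heq : b * (c / (b * n) - 1) = c / n - b := by
      field_simp
    linarith [heq ▸ this]

noncomputable def CEF (P : X × Y → ℝ) : ℝ :=
  ∑ x : X, ∑ y : Y, Fent (P (x, y)) (∑ y' : Y, P (x, y'))

lemma marg_nonneg {P : X × Y → ℝ} (hP : ∀ z, 0 ≤ P z) (x : X) :
    0 ≤ ∑ y' : Y, P (x, y') := Finset.sum_nonneg fun _ _ => hP _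

lemma le_marg {P : X × Y → ℝ} (hP : ∀ z, 0 ≤ P z) (x : X) (y : Y) :
    P (x, y) ≤ ∑ y' : Y, P (x, y') :=
  Finset.single_le_sum (fun i _ => hP (x, i)) (Finset.mem_univ y)

lemma CEF_nonneg {P : X × Y → ℝ} (hP : ∀ z, 0 ≤ P z) : 0 ≤ CEF P :=
  Finset.sum_nonneg fun x _ => Finset.sum_nonneg fun y _ =>
    Fent_nonneg (hP _) (le_marg hP x y)

lemma CEF_le [Nonempty Y] {P : X × Y → ℝ} (hP : ∀ z, 0 ≤ P z) :
    CEF P ≤ (∑ x : X, ∑ y : Y, P (x, y)) * Real.log (Fintype.card Y) := by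
  have hn : 1 ≤ Fintype.card Y := Fintype.card_pos
  rw [Finset.sum_mul]
  apply Finset.sum_le_sum
  intro x _
  set c := ∑ y' : Y, P (x, y') with hc
  calc ∑ y : Y, Fent (P (x, y)) c
      ≤ ∑ y : Y, (c / (Fintype.card Y) - P (x, y) + P (x, y) * Real.log (Fintype.card Y)) :=
        Finset.sum_le_sum fun y _ => Fent_le_card _ hn (hP _) (le_marg hP x y)
    _ = c * Real.log (Fintype.card Y) := by
        rw [Finset.sum_add_distrib, Finset.sum_sub_distrib, ← Finset.sum_mul,
          Finset.sum_const, ← hc]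
        have : (Fintype.card Y : ℝ) ≠ 0 := by positivity
        rw [Finset.card_univ, nsmul_eq_mul, mul_div_cancel₀ _ this]; ring
    _ = (∑ y : Y, P (x, y)) * Real.log (Fintype.card Y) := by rw [hc]

lemma CEF_superadd {u v : X × Y → ℝ} (hu : ∀ z, 0 ≤ u z) (hv : ∀ z, 0 ≤ v z) :
    CEF u + CEF v ≤ CEF (fun z => u z + v z) := by
  rw [CEF, CEF, CEF, ← Finset.sum_add_distrib]
  apply Finset.sum_le_sum
  intro x _
  rw [← Finset.sum_add_distrib]
  apply Finset.sum_le_sum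
  intro y _
  have : ∑ y' : Y, (u (x, y') + v (x, y')) = (∑ y' : Y, u (x, y')) + ∑ y' : Y, v (x, y') :=
    Finset.sum_add_distrib
  rw [this]
  exact Fent_superadd (hu _) (hv _) (le_marg hu x y) (le_marg hv x y)

lemma CEF_almost {u v : X × Y → ℝ} (hu : ∀ z, 0 ≤ u z) (hv : ∀ z, 0 ≤ v z) :
    CEF (fun z => u z + v z) ≤ CEF u + CEF v
      + Fent (∑ x : X, ∑ y : Y, u (x, y))
          ((∑ x : X, ∑ y : Y, u (x, y)) + ∑ x : X, ∑ y : Y, v (x, y))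
      + Fent (∑ x : X, ∑ y : Y, v (x, y))
          ((∑ x : X, ∑ y : Y, u (x, y)) + ∑ x : X, ∑ y : Y, v (x, y)) := by
  have hstep : CEF (fun z => u z + v z) ≤ CEF u + CEF v
      + (∑ x : X, Fent (∑ y' : Y, u (x, y'))
          ((∑ y' : Y, u (x, y')) + ∑ y' : Y, v (x, y')))
      + (∑ x : X, Fent (∑ y' : Y, v (x, y'))
          ((∑ y' : Y, u (x, y')) + ∑ y' : Y, v (x, y'))) := by
    rw [CEF, CEF, CEF]
    have hsum : ∀ x : X, ∑ y : Y, Fent ((fun z => u z + v z) (x, y))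
        (∑ y' : Y, (fun z => u z + v z) (x, y'))
        ≤ (∑ y : Y, Fent (u (x, y)) (∑ y' : Y, u (x, y')))
          + (∑ y : Y, Fent (v (x, y)) (∑ y' : Y, v (x, y')))
          + Fent (∑ y' : Y, u (x, y')) ((∑ y' : Y, u (x, y')) + ∑ y' : Y, v (x, y'))
          + Fent (∑ y' : Y, v (x, y')) ((∑ y' : Y, u (x, y')) + ∑ y' : Y, v (x, y')) := by
      intro x
      set cu := ∑ y' : Y, u (x, y') with hcu
      set cv := ∑ y' : Y, v (x, y') with hcv
      have hsplit : ∑ y' : Y, (u (x, y') + v (x, y')) = cu + cv := Finset.sum_add_distrib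
      calc ∑ y : Y, Fent (u (x, y) + v (x, y)) (∑ y' : Y, (u (x, y') + v (x, y')))
          ≤ ∑ y : Y, (Fent (u (x, y)) cu + Fent (v (x, y)) cv
              + u (x, y) * Real.log ((cu + cv) / cu)
              + v (x, y) * Real.log ((cu + cv) / cv)) := by
            apply Finset.sum_le_sum
            intro y _
            rw [hsplit]
            exact Fent_add_le (hu _) (hv _) (le_marg hu x y) (le_marg hv x y)
        _ = (∑ y : Y, Fent (u (x, y)) cu) + (∑ y : Y, Fent (v (x, y)) cv)
            + Fent cu (cu + cv) + Fent cv (cu + cv) := by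
            rw [Finset.sum_add_distrib, Finset.sum_add_distrib, Finset.sum_add_distrib,
              ← Finset.sum_mul, ← Finset.sum_mul, ← hcu, ← hcv, Fent, Fent]
    calc ∑ x : X, ∑ y : Y, Fent ((fun z => u z + v z) (x, y))
          (∑ y' : Y, (fun z => u z + v z) (x, y'))
        ≤ ∑ x : X, ((∑ y : Y, Fent (u (x, y)) (∑ y' : Y, u (x, y')))
          + (∑ y : Y, Fent (v (x, y)) (∑ y' : Y, v (x, y')))
          + Fent (∑ y' : Y, u (x, y')) ((∑ y' : Y, u (x, y')) + ∑ y' : Y, v (x, y'))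
          + Fent (∑ y' : Y, v (x, y')) ((∑ y' : Y, u (x, y')) + ∑ y' : Y, v (x, y'))) :=
          Finset.sum_le_sum fun x _ => hsum x
      _ = _ := by
          rw [Finset.sum_add_distrib, Finset.sum_add_distrib, Finset.sum_add_distrib]
  refine le_trans hstep ?_
  have h1 : ∑ x : X, Fent (∑ y' : Y, u (x, y'))
      ((∑ y' : Y, u (x, y')) + ∑ y' : Y, v (x, y'))
      ≤ Fent (∑ x : X, ∑ y : Y, u (x, y))
        ((∑ x : X, ∑ y : Y, u (x, y)) + ∑ x : X, ∑ y : Y, v (x, y)) := by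
    have := Fent_sum_le (Finset.univ : Finset X)
      (fun x => ∑ y' : Y, u (x, y'))
      (fun x => (∑ y' : Y, u (x, y')) + ∑ y' : Y, v (x, y'))
      (fun x _ => marg_nonneg hu x)
      (fun x _ => le_add_of_nonneg_right (marg_nonneg hv x))
    simpa [Finset.sum_add_distrib] using this
  have h2 : ∑ x : X, Fent (∑ y' : Y, v (x, y'))
      ((∑ y' : Y, u (x, y')) + ∑ y' : Y, v (x, y'))
      ≤ Fent (∑ x : X, ∑ y : Y, v (x, y))
        ((∑ x : X, ∑ y : Y, u (x, y)) + ∑ x : X, ∑ y : Y, v (x, y)) := by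
    have := Fent_sum_le (Finset.univ : Finset X)
      (fun x => ∑ y' : Y, v (x, y'))
      (fun x => (∑ y' : Y, u (x, y')) + ∑ y' : Y, v (x, y'))
      (fun x _ => marg_nonneg hv x)
      (fun x _ => le_add_of_nonneg_left (marg_nonneg hu x))
    simpa [Finset.sum_add_distrib] using this
  linarith

lemma Fent_split_binEntropy (δ : ℝ) :
    Fent (1 - δ) 1 + Fent δ 1 = Real.binEntropy δ := by
  simp [Fent, Real.binEntropy, one_div, add_comm]

/-- The one-sided Alicki–Fannes bound. -/
lemma CEF_diff_le {X Y : Type*} [Fintype X] [Fintype Y] [Nonempty Y]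
    (P Q : X × Y → ℝ) (hP0 : ∀ z, 0 ≤ P z) (hQ0 : ∀ z, 0 ≤ Q z)
    (hP1 : ∑ x : X, ∑ y : Y, P (x, y) = 1) (hQ1 : ∑ x : X, ∑ y : Y, Q (x, y) = 1) :
    CEF P ≤ CEF Q + ((∑ x : X, ∑ y : Y, |P (x, y) - Q (x, y)|) / 2)
        * Real.log (Fintype.card Y)
      + Real.binEntropy ((∑ x : X, ∑ y : Y, |P (x, y) - Q (x, y)|) / 2) := by
  set δ := (∑ x : X, ∑ y : Y, |P (x, y) - Q (x, y)|) / 2 with hδ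
  set m : X × Y → ℝ := fun z => min (P z) (Q z) with hm
  set r : X × Y → ℝ := fun z => P z - m z with hr
  set r' : X × Y → ℝ := fun z => Q z - m z with hr'
  have hm0 : ∀ z, 0 ≤ m z := fun z => le_min (hP0 z) (hQ0 z)
  have hr0 : ∀ z, 0 ≤ r z := fun z => sub_nonneg.mpr (min_le_left _ _)
  have hr'0 : ∀ z, 0 ≤ r' z := fun z => sub_nonneg.mpr (min_le_right _ _)
  have habs : ∀ z : X × Y, r z + r' z = |P z - Q z| := by
    intro z
    rcases le_total (P z) (Q z) with h | h
    · simp [hr, hr', hm, min_eq_left h, abs_of_nonpos (sub_nonpos.mpr h)]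
    · simp [hr, hr', hm, min_eq_right h, abs_of_nonneg (sub_nonneg.mpr h)]
  have hsum_rr' : (∑ x : X, ∑ y : Y, r (x, y)) + (∑ x : X, ∑ y : Y, r' (x, y)) = 2 * δ := by
    rw [hδ]
    rw [← Finset.sum_add_distrib]
    simp_rw [← Finset.sum_add_distrib, habs]
    ring
  have hmr : (∑ x : X, ∑ y : Y, m (x, y)) + (∑ x : X, ∑ y : Y, r (x, y)) = 1 := by
    rw [← Finset.sum_add_distrib]
    simp_rw [← Finset.sum_add_distrib]
    rw [← hP1]
    congr 1; ext x; congr 1; ext y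
    simp [hr]
  have hmr' : (∑ x : X, ∑ y : Y, m (x, y)) + (∑ x : X, ∑ y : Y, r' (x, y)) = 1 := by
    rw [← Finset.sum_add_distrib]
    simp_rw [← Finset.sum_add_distrib]
    rw [← hQ1]
    congr 1; ext x; congr 1; ext y
    simp [hr']
  have hSr : (∑ x : X, ∑ y : Y, r (x, y)) = δ := by linarith
  have hSm : (∑ x : X, ∑ y : Y, m (x, y)) = 1 - δ := by linarith
  have hPmr : P = fun z => m z + r z := by funext z; simp [hr]
  have hQmr : Q = fun z => m z + r' z := by funext z; simp [hr']
  have hup : CEF P ≤ CEF m + δ * Real.log (Fintype.card Y) + Real.binEntropy δ := by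
    have h1 := CEF_almost hm0 hr0
    rw [← hPmr] at h1
    rw [hSm, hSr] at h1
    have h2 : CEF r ≤ δ * Real.log (Fintype.card Y) := by
      have := CEF_le (X := X) (Y := Y) hr0
      rwa [hSr] at this
    have h3 : (1 - δ) + δ = 1 := by ring
    rw [h3] at h1
    have h4 := Fent_split_binEntropy δ
    linarith
  have hdown : CEF m ≤ CEF Q := by
    have h1 := CEF_superadd hm0 hr'0
    rw [← hQmr] at h1
    have h2 := CEF_nonneg hr'0
    linarith
  linarith

lemma binEntropy_one_third : Real.binEntropy (1/3 : ℝ) = Real.log 3 - (2/3) * Real.log 2 := by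
  rw [Real.binEntropy]
  have h1 : ((1:ℝ)/3)⁻¹ = 3 := by norm_num
  have h2 : (1 - (1:ℝ)/3) = 2/3 := by norm_num
  have h3 : ((2:ℝ)/3)⁻¹ = 3/2 := by norm_num
  rw [h1, h2, h3, show (3:ℝ)/2 = 3/2 from rfl, Real.log_div (by norm_num) (by norm_num)]
  ring

lemma seven_log_two_le : 7 * Real.log 2 ≤ 6 * Real.log 3 := by
  have h : Real.log ((2:ℝ)^7) ≤ Real.log ((3:ℝ)^6) :=
    Real.log_le_log (by norm_num) (by norm_num)
  rw [Real.log_pow, Real.log_pow] at h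
  push_cast at h
  linarith

lemma arith_final (n : ℕ) (hn : 2 ≤ n) {δ ε : ℝ} (hδ0 : 0 ≤ δ) (hδε : 2 * δ ≤ ε)
    (hε0 : 0 < ε) (hε1 : ε < 1) :
    δ * Real.log n + Real.binEntropy δ ≤ 2 * ε * Real.log n + 2 * Real.binEntropy ε := by
  set L := Real.log n with hL
  have hL2 : Real.log 2 ≤ L := Real.log_le_log (by norm_num) (by exact_mod_cast hn)
  have hLpos : 0 < L := lt_of_lt_of_le (Real.log_pos (by norm_num)) hL2
  have hδhalf : δ ≤ ε / 2 := by linarith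
  have hδL : δ * L ≤ 2 * ε * L := by
    apply mul_le_mul_of_nonneg_right (by linarith) hLpos.le
  rcases le_or_gt ε (1/2) with h | h
  · have hmono : Real.binEntropy δ ≤ Real.binEntropy ε := by
      have hi : (2:ℝ)⁻¹ = 1/2 := by norm_num
      apply Real.binEntropy_strictMonoOn.monotoneOn
        ⟨hδ0, by rw [hi]; linarith⟩
        ⟨hε0.le, by rw [hi]; linarith⟩ (by linarith)
    have hnn : 0 ≤ Real.binEntropy ε := Real.binEntropy_nonneg hε0.le hε1.le
    linarith
  · have hbδ : Real.binEntropy δ ≤ Real.log 2 := Real.binEntropy_le_log_two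
    rcases le_or_gt ε (2/3) with h2 | h2
    · have hsym : Real.binEntropy ε = Real.binEntropy (1 - ε) :=
        (Real.binEntropy_one_sub ε).symm
      have hmono : Real.binEntropy (1/3 : ℝ) ≤ Real.binEntropy (1 - ε) := by
        have hi : (2:ℝ)⁻¹ = 1/2 := by norm_num
        apply Real.binEntropy_strictMonoOn.monotoneOn
          ⟨by norm_num, by rw [hi]; norm_num⟩
          ⟨by linarith, by rw [hi]; linarith⟩ (by linarith)
      have hval : Real.log 2 ≤ 2 * Real.binEntropy (1/3 : ℝ) := by
        rw [binEntropy_one_third]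
        have := seven_log_two_le
        linarith
      linarith
    · have h1 : (1:ℝ) ≤ 2 * ε - δ := by linarith
      have h2' : Real.log 2 ≤ (2 * ε - δ) * L :=
        le_trans hL2 (le_mul_of_one_le_left hLpos.le h1)
      have hnn : 0 ≤ Real.binEntropy ε := Real.binEntropy_nonneg hε0.le hε1.le
      nlinarith

lemma le_marg' {X Y : Type*} [Fintype X] [Fintype Y] {P : X × Y → ℝ}
    (hP : ∀ z, 0 ≤ P z) (x : X) (y : Y) :
    P (x, y) ≤ ∑ y' : Y, P (x, y') :=
  Finset.single_le_sum (fun i _ => hP (x, i)) (Finset.mem_univ y)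

lemma condEnt_eq_CEF {X Y : Type*} [Fintype X] [Fintype Y] {P : X × Y → ℝ}
    (hP : ∀ z, 0 ≤ P z) : condEnt P = CEF P / Real.log 2 := by
  rw [condEnt, CEF, Finset.sum_div, ← Finset.sum_neg_distrib]
  apply Finset.sum_congr rfl
  intro x _
  rw [Finset.sum_div, ← Finset.sum_neg_distrib]
  apply Finset.sum_congr rfl
  intro y _
  set c := ∑ y' : Y, P (x, y') with hc
  rcases eq_or_lt_of_le (hP (x, y)) with h | h
  · rw [← h]; simp [Fent]
  · have hcpos : 0 < c := lt_of_lt_of_le h (le_marg' hP x y)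
    rw [Real.logb, Fent]
    have hinv : c / P (x, y) = (P (x, y) / c)⁻¹ := by
      rw [inv_div]
    rw [hinv, Real.log_inv]
    field_simp

lemma H2_eq (ε : ℝ) : H2 ε = Real.binEntropy ε / Real.log 2 := by
  rw [H2, Real.binEntropy, Real.logb, Real.logb, Real.log_inv, Real.log_inv]
  field_simp
  ring

end Aux

/-- continuity of conditional entropy in total variation distance. -/
theorem conditional_entropy_continuity {X Y : Type*} [Fintype X] [Fintype Y]
    {ε : ℝ} (hε : ε ∈ Set.Ioo (0 : ℝ) 1)
    (P Q : X × Y → ℝ) (hP : IsProb P) (hQ : IsProb Q)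
    (hd : ∑ x : X, ∑ y : Y, |P (x, y) - Q (x, y)| ≤ ε) :
    |condEnt P - condEnt Q| ≤ 2 * ε * Real.logb 2 (Fintype.card Y) + 2 * H2 ε := by
  obtain ⟨hε0, hε1⟩ := hε
  have hP1 : ∑ x : X, ∑ y : Y, P (x, y) = 1 := by
    rw [← Fintype.sum_prod_type]; exact hP.2
  have hQ1 : ∑ x : X, ∑ y : Y, Q (x, y) = 1 := by
    rw [← Fintype.sum_prod_type]; exact hQ.2
  have hYne : Nonempty Y := by
    by_contra h
    rw [not_nonempty_iff] at h
    simp [Finset.univ_eq_empty] at hP1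
  have hlog2 : (0:ℝ) < Real.log 2 := Real.log_pos (by norm_num)
  have hcard : 1 ≤ Fintype.card Y := Fintype.card_pos
  -- reduce to the natural-log statement
  rw [condEnt_eq_CEF hP.1, condEnt_eq_CEF hQ.1, H2_eq, Real.logb, div_sub_div_same, abs_div,
    abs_of_pos hlog2]
  have key : |CEF P - CEF Q| ≤ 2 * ε * Real.log (Fintype.card Y) + 2 * Real.binEntropy ε := by
    set δ := (∑ x : X, ∑ y : Y, |P (x, y) - Q (x, y)|) / 2 with hδ
    have hδ0 : 0 ≤ δ := by
      apply div_nonneg _ (by norm_num)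
      exact Finset.sum_nonneg fun _ _ => Finset.sum_nonneg fun _ _ => abs_nonneg _
    have hδε : 2 * δ ≤ ε := by rw [hδ]; linarith
    have habs_comm : (∑ x : X, ∑ y : Y, |Q (x, y) - P (x, y)|) / 2 = δ := by
      rw [hδ]; congr 1; exact Finset.sum_congr rfl fun x _ =>
        Finset.sum_congr rfl fun y _ => abs_sub_comm _ _
    have h1 := CEF_diff_le P Q hP.1 hQ.1 hP1 hQ1
    rw [← hδ] at h1
    have h2 := CEF_diff_le Q P hQ.1 hP.1 hQ1 hP1
    rw [habs_comm] at h2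
    have hbound : |CEF P - CEF Q| ≤ δ * Real.log (Fintype.card Y) + Real.binEntropy δ := by
      rw [abs_le]
      constructor <;> [linarith; linarith]
    rcases eq_or_lt_of_le hcard with h1' | h1'
    · -- card Y = 1 : both CEF are 0
      have hc1 : (Fintype.card Y : ℝ) = 1 := by exact_mod_cast h1'.symm
      have hlog1 : Real.log (Fintype.card Y) = 0 := by rw [hc1, Real.log_one]
      have hCP : CEF P = 0 := le_antisymm (by
        have := CEF_le (X := X) (Y := Y) hP.1
        rwa [hP1, one_mul, hlog1] at this) (CEF_nonneg hP.1)
      have hCQ : CEF Q = 0 := le_antisymm (by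
        have := CEF_le (X := X) (Y := Y) hQ.1
        rwa [hQ1, one_mul, hlog1] at this) (CEF_nonneg hQ.1)
      rw [hCP, hCQ, sub_zero, abs_zero, hlog1]
      have := Real.binEntropy_nonneg hε0.le hε1.le
      linarith
    · exact le_trans hbound (arith_final _ h1' hδ0 hδε hε0 hε1)
  calc |CEF P - CEF Q| / Real.log 2
      ≤ (2 * ε * Real.log (Fintype.card Y) + 2 * Real.binEntropy ε) / Real.log 2 := by
        apply div_le_div_of_nonneg_right key hlog2.le
    _ = 2 * ε * (Real.log (Fintype.card Y) / Real.log 2) + 2 * (Real.binEntropy ε / Real.log 2) := by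
        field_simp
end

section
/- Let X and Y be finite alphabets, ε ∈ (0,1), let P and P̂ be joint probability distributions on X×Y, and set p* = (1−ε)P + ε·P̂ (pointwise mixture). Then |H(Y|X‖P) − H(Y|X‖p*)| ≤ ε·log|Y| + H₂(ε). -/
open Real Finset

lemma nmL_add_le {a b : ℝ} (ha : 0 ≤ a) (hb : 0 ≤ b) :
    negMulLog (a + b) ≤ negMulLog a + negMulLog b := by
  have h1 : a * Real.log a ≤ a * Real.log (a + b) := by
    rcases ha.eq_or_lt with h | h
    · simp [← h]
    · exact mul_le_mul_of_nonneg_left (Real.log_le_log h (by linarith)) ha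
  have h2 : b * Real.log b ≤ b * Real.log (a + b) := by
    rcases hb.eq_or_lt with h | h
    · simp [← h]
    · exact mul_le_mul_of_nonneg_left (Real.log_le_log h (by linarith)) hb
  simp only [negMulLog, neg_mul]
  nlinarith [add_mul a b (Real.log (a + b))]

lemma nmL_sum_le {α : Type*} (s : Finset α) (q : α → ℝ) (hq : ∀ a, 0 ≤ q a) :
    negMulLog (∑ a ∈ s, q a) ≤ ∑ a ∈ s, negMulLog (q a) := by
  induction s using Finset.cons_induction with
  | empty => simp
  | cons a s ha ih =>
    rw [Finset.sum_cons, Finset.sum_cons]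
    exact (nmL_add_le (hq a) (Finset.sum_nonneg fun i _ => hq i)).trans (by linarith)

lemma nmL_sum_le_card {α : Type*} [Fintype α] [Nonempty α] (q : α → ℝ) (hq : ∀ a, 0 ≤ q a) :
    ∑ a, negMulLog (q a) ≤ negMulLog (∑ a, q a) + (∑ a, q a) * Real.log (Fintype.card α) := by
  set n : ℝ := (Fintype.card α : ℝ) with hn_def
  have hn : 0 < n := by
    have := Fintype.card_pos (α := α)
    positivity
  set s := ∑ a, q a with hs_def
  have hs0 : 0 ≤ s := Finset.sum_nonneg fun i _ => hq i
  have key : ∀ a : α, negMulLog (q a) + q a * Real.log s - q a * Real.log n ≤ s / n - q a := by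
    intro a
    rcases (hq a).eq_or_lt with h | h
    · simp only [negMulLog, ← h]
      simp
      positivity
    · have hqs : q a ≤ s := Finset.single_le_sum (fun i _ => hq i) (Finset.mem_univ a)
      have hspos : 0 < s := lt_of_lt_of_le h hqs
      have hlog : Real.log (s / (q a * n)) ≤ s / (q a * n) - 1 :=
        Real.log_le_sub_one_of_pos (by positivity)
      have heq : negMulLog (q a) + q a * Real.log s - q a * Real.log n
          = q a * Real.log (s / (q a * n)) := by
        rw [Real.log_div (ne_of_gt hspos) (by positivity),
          Real.log_mul (ne_of_gt h) (ne_of_gt hn), negMulLog]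
        ring
      rw [heq]
      have := mul_le_mul_of_nonneg_left hlog (le_of_lt h)
      calc q a * Real.log (s / (q a * n)) ≤ q a * (s / (q a * n) - 1) := this
        _ = s / n - q a := by field_simp
  have hsum := Finset.sum_le_sum (fun a (_ : a ∈ Finset.univ) => key a)
  have hL : ∑ a : α, (negMulLog (q a) + q a * Real.log s - q a * Real.log n)
      = (∑ a : α, negMulLog (q a)) + s * Real.log s - s * Real.log n := by
    rw [Finset.sum_sub_distrib, Finset.sum_add_distrib, ← Finset.sum_mul, ← Finset.sum_mul]
  have hR : ∑ a : α, (s / n - q a) = 0 := by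
    rw [Finset.sum_sub_distrib, Finset.sum_const, nsmul_eq_mul]
    have hc : ((Finset.univ : Finset α).card : ℝ) = n := by simp [hn_def]
    rw [hc, mul_div_cancel₀ _ (ne_of_gt hn), ← hs_def]
    ring
  rw [hL, hR] at hsum
  simp only [negMulLog, neg_mul] at hsum ⊢
  linarith

lemma nmL_concave {ε a b : ℝ} (hε0 : 0 ≤ ε) (hε1 : ε ≤ 1) (ha : 0 ≤ a) (hb : 0 ≤ b) :
    (1 - ε) * negMulLog a + ε * negMulLog b ≤ negMulLog ((1 - ε) * a + ε * b) := by
  have := Real.concaveOn_negMulLog.2 (Set.mem_Ici.mpr ha) (Set.mem_Ici.mpr hb)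
    (by linarith : (0:ℝ) ≤ 1 - ε) hε0 (by ring)
  simpa using this

lemma nmL_mix_ub {ε a b : ℝ} (hε0 : 0 ≤ ε) (hε1 : ε ≤ 1) (ha : 0 ≤ a) (hb : 0 ≤ b) :
    negMulLog ((1 - ε) * a + ε * b) ≤ (1 - ε) * negMulLog a + ε * negMulLog b
      + a * negMulLog (1 - ε) + b * negMulLog ε := by
  have h1 := nmL_add_le (a := (1 - ε) * a) (b := ε * b)
    (mul_nonneg (by linarith) ha) (mul_nonneg hε0 hb)
  rw [Real.negMulLog_mul, Real.negMulLog_mul] at h1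
  linarith

lemma row_eq {Y : Type*} [Fintype Y] (q : Y → ℝ) (hq : ∀ y, 0 ≤ q y) :
    -∑ y, q y * Real.log (q y / ∑ y', q y')
      = (∑ y, negMulLog (q y)) - negMulLog (∑ y, q y) := by
  rcases eq_or_lt_of_le (Finset.sum_nonneg fun i (_ : i ∈ Finset.univ) => hq i) with h | h
  · have hz : ∀ y, q y = 0 := by
      intro y
      have := (Finset.sum_eq_zero_iff_of_nonneg (fun i (_ : i ∈ Finset.univ) => hq i)).mp h.symm
      exact this y (Finset.mem_univ y)
    simp [hz]
  · have hterm : ∀ y, q y * Real.log (q y / ∑ y', q y')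
        = q y * Real.log (q y) - q y * Real.log (∑ y', q y') := by
      intro y
      rcases (hq y).eq_or_lt with h2 | h2
      · simp [← h2]
      · rw [Real.log_div (ne_of_gt h2) (ne_of_gt h)]; ring
    simp only [hterm]
    rw [Finset.sum_sub_distrib, ← Finset.sum_mul]
    simp only [negMulLog, neg_mul]
    rw [Finset.sum_neg_distrib]
    ring

lemma condEnt_mul_log2 {X Y : Type*} [Fintype X] [Fintype Y] (P : X × Y → ℝ)
    (hP : ∀ a, 0 ≤ P a) :
    condEnt P * Real.log 2 =
      (∑ x, ∑ y, negMulLog (P (x, y))) - ∑ x, negMulLog (∑ y, P (x, y)) := by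
  have hlog2 : Real.log 2 ≠ 0 := by
    have := Real.log_pos (by norm_num : (1:ℝ) < 2); linarith
  have hx : ∀ x : X, -((∑ y, P (x, y) * Real.logb 2 (P (x, y) / ∑ y', P (x, y'))) * Real.log 2)
      = (∑ y, negMulLog (P (x, y))) - negMulLog (∑ y, P (x, y)) := by
    intro x
    rw [Finset.sum_mul]
    have ht : ∀ y : Y, P (x, y) * Real.logb 2 (P (x, y) / ∑ y', P (x, y')) * Real.log 2
        = P (x, y) * Real.log (P (x, y) / ∑ y', P (x, y')) := by
      intro y; rw [Real.logb]; field_simp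
    rw [Finset.sum_congr rfl (fun y _ => ht y)]
    exact row_eq (fun y => P (x, y)) (fun y => hP _)
  calc condEnt P * Real.log 2
      = ∑ x, -((∑ y, P (x, y) * Real.logb 2 (P (x, y) / ∑ y', P (x, y'))) * Real.log 2) := by
        rw [condEnt, neg_mul, Finset.sum_mul, ← Finset.sum_neg_distrib]
    _ = ∑ x, ((∑ y, negMulLog (P (x, y))) - negMulLog (∑ y, P (x, y))) :=
        Finset.sum_congr rfl (fun x _ => hx x)
    _ = _ := Finset.sum_sub_distrib _ _

lemma mix_lb' {α : Type*} [Fintype α] {ε : ℝ} (hε0 : 0 ≤ ε) (hε1 : ε ≤ 1)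
    (q r : α → ℝ) (hq : ∀ a, 0 ≤ q a) (hr : ∀ a, 0 ≤ r a) :
    (1 - ε) * ∑ a, negMulLog (q a) + ε * ∑ a, negMulLog (r a)
      ≤ ∑ a, negMulLog ((1 - ε) * q a + ε * r a) := by
  rw [Finset.mul_sum, Finset.mul_sum, ← Finset.sum_add_distrib]
  exact Finset.sum_le_sum fun a _ => nmL_concave hε0 hε1 (hq a) (hr a)

lemma mix_ub' {α : Type*} [Fintype α] {ε : ℝ} (hε0 : 0 ≤ ε) (hε1 : ε ≤ 1)
    (q r : α → ℝ) (hq : ∀ a, 0 ≤ q a) (hr : ∀ a, 0 ≤ r a) :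
    ∑ a, negMulLog ((1 - ε) * q a + ε * r a)
      ≤ (1 - ε) * ∑ a, negMulLog (q a) + ε * ∑ a, negMulLog (r a)
        + (∑ a, q a) * negMulLog (1 - ε) + (∑ a, r a) * negMulLog ε := by
  have h := Finset.sum_le_sum fun a (_ : a ∈ Finset.univ) =>
    nmL_mix_ub hε0 hε1 (hq a) (hr a)
  calc ∑ a, negMulLog ((1 - ε) * q a + ε * r a)
      ≤ ∑ a, ((1 - ε) * negMulLog (q a) + ε * negMulLog (r a)
          + q a * negMulLog (1 - ε) + r a * negMulLog ε) := h
    _ = _ := by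
        rw [Finset.sum_add_distrib, Finset.sum_add_distrib, Finset.sum_add_distrib,
          ← Finset.mul_sum, ← Finset.mul_sum, ← Finset.sum_mul, ← Finset.sum_mul]

/-- conditional entropy of an `ε`-mixture is close to that of the original. -/
theorem conditional_entropy_mixture_bound {X Y : Type*} [Fintype X] [Fintype Y]
    {ε : ℝ} (hε : ε ∈ Set.Ioo (0 : ℝ) 1)
    (P Phat : X × Y → ℝ) (hP : IsProb P) (hPhat : IsProb Phat) :
    |condEnt P - condEnt (fun a : X × Y => (1 - ε) * P a + ε * Phat a)| ≤
      ε * Real.logb 2 (Fintype.card Y) + H2 ε := by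
  obtain ⟨hε0, hε1⟩ := hε
  obtain ⟨hPnn, hPs⟩ := hP
  obtain ⟨hHnn, hHs⟩ := hPhat
  have hε0' : (0:ℝ) ≤ ε := le_of_lt hε0
  have hε1' : ε ≤ 1 := le_of_lt hε1
  set Pm : X × Y → ℝ := fun a : X × Y => (1 - ε) * P a + ε * Phat a with hPm_def
  have hPmnn : ∀ a, 0 ≤ Pm a := fun a => by
    have h1 := hPnn a; have h2 := hHnn a
    simp only [hPm_def]; nlinarith
  have hne : Nonempty (X × Y) := by
    by_contra h
    rw [not_nonempty_iff] at h
    rw [Finset.univ_eq_empty, Finset.sum_empty] at hPs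
    norm_num at hPs
  have hneY : Nonempty Y := ⟨hne.some.2⟩
  have hl2 : (0:ℝ) < Real.log 2 := Real.log_pos (by norm_num)
  -- masses
  have hPs' : ∑ x : X, ∑ y : Y, P (x, y) = 1 := by
    rw [← Fintype.sum_prod_type]; exact hPs
  have hHs' : ∑ x : X, ∑ y : Y, Phat (x, y) = 1 := by
    rw [← Fintype.sum_prod_type]; exact hHs
  -- marginal of mixture
  have hmarg : ∀ x : X, (∑ y : Y, Pm (x, y))
      = (1 - ε) * (∑ y : Y, P (x, y)) + ε * ∑ y : Y, Phat (x, y) := by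
    intro x
    simp only [hPm_def, Finset.mul_sum, Finset.sum_add_distrib]
  -- entropies
  set JP := ∑ x : X, ∑ y : Y, negMulLog (P (x, y)) with hJP
  set MP := ∑ x : X, negMulLog (∑ y : Y, P (x, y)) with hMP
  set JH := ∑ x : X, ∑ y : Y, negMulLog (Phat (x, y)) with hJH
  set MH := ∑ x : X, negMulLog (∑ y : Y, Phat (x, y)) with hMH
  set JM := ∑ x : X, ∑ y : Y, negMulLog (Pm (x, y)) with hJM
  set MM := ∑ x : X, negMulLog (∑ y : Y, Pm (x, y)) with hMM
  have hA : condEnt P * Real.log 2 = JP - MP := condEnt_mul_log2 P hPnn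
  have hM : condEnt Pm * Real.log 2 = JM - MM := condEnt_mul_log2 Pm hPmnn
  -- joint mixture bounds
  have hJsingle : JM = ∑ a : X × Y, negMulLog (Pm a) := by
    rw [hJM]; rw [Fintype.sum_prod_type]
  have hJPs : JP = ∑ a : X × Y, negMulLog (P a) := by
    rw [hJP]; rw [Fintype.sum_prod_type]
  have hJHs : JH = ∑ a : X × Y, negMulLog (Phat a) := by
    rw [hJH]; rw [Fintype.sum_prod_type]
  have hJM1 : (1 - ε) * JP + ε * JH ≤ JM := by
    rw [hJsingle, hJPs, hJHs]
    exact mix_lb' hε0' hε1' P Phat hPnn hHnn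
  have hJM2 : JM ≤ (1 - ε) * JP + ε * JH + negMulLog (1 - ε) + negMulLog ε := by
    have h := mix_ub' hε0' hε1' P Phat hPnn hHnn
    rw [hPs, hHs, one_mul, one_mul] at h
    rw [hJsingle, hJPs, hJHs]
    exact h
  -- marginal mixture bounds
  have hMnn : ∀ x : X, 0 ≤ ∑ y : Y, P (x, y) :=
    fun x => Finset.sum_nonneg fun y _ => hPnn _
  have hMHnn : ∀ x : X, 0 ≤ ∑ y : Y, Phat (x, y) :=
    fun x => Finset.sum_nonneg fun y _ => hHnn _
  have hMMrw : MM = ∑ x : X, negMulLog ((1 - ε) * (∑ y : Y, P (x, y))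
      + ε * ∑ y : Y, Phat (x, y)) := by
    rw [hMM]; exact Finset.sum_congr rfl fun x _ => by rw [hmarg x]
  have hMM1 : (1 - ε) * MP + ε * MH ≤ MM := by
    rw [hMMrw, hMP, hMH]
    exact mix_lb' hε0' hε1' _ _ hMnn hMHnn
  have hMM2 : MM ≤ (1 - ε) * MP + ε * MH + negMulLog (1 - ε) + negMulLog ε := by
    have := mix_ub' hε0' hε1' (fun x => ∑ y : Y, P (x, y))
      (fun x => ∑ y : Y, Phat (x, y)) hMnn hMHnn
    rw [hPs', hHs', one_mul, one_mul] at this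
    rw [hMMrw, hMP, hMH]
    exact this
  -- conditional entropy range bounds
  set L := Real.log (Fintype.card Y) with hLdef
  have hL0 : 0 ≤ L := Real.log_nonneg (by exact_mod_cast Fintype.card_pos)
  have hCP0 : 0 ≤ JP - MP := by
    rw [hJP, hMP, ← Finset.sum_sub_distrib]
    exact Finset.sum_nonneg fun x _ => by
      have := nmL_sum_le Finset.univ (fun y => P (x, y)) (fun y => hPnn _)
      linarith
  have hCPL : JP - MP ≤ L := by
    have h := Finset.sum_le_sum fun x (_ : x ∈ Finset.univ) =>
      nmL_sum_le_card (fun y => P (x, y)) (fun y => hPnn _)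
    rw [Finset.sum_add_distrib, ← Finset.sum_mul, hPs', one_mul] at h
    rw [hJP, hMP]; linarith
  have hCH0 : 0 ≤ JH - MH := by
    rw [hJH, hMH, ← Finset.sum_sub_distrib]
    exact Finset.sum_nonneg fun x _ => by
      have := nmL_sum_le Finset.univ (fun y => Phat (x, y)) (fun y => hHnn _)
      linarith
  have hCHL : JH - MH ≤ L := by
    have h := Finset.sum_le_sum fun x (_ : x ∈ Finset.univ) =>
      nmL_sum_le_card (fun y => Phat (x, y)) (fun y => hHnn _)
    rw [Finset.sum_add_distrib, ← Finset.sum_mul, hHs', one_mul] at h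
    rw [hJH, hMH]; linarith
  -- products for linarith
  have hp1 : ε * (JP - MP) ≤ ε * L := mul_le_mul_of_nonneg_left hCPL hε0'
  have hp2 : 0 ≤ ε * (JH - MH) := mul_nonneg hε0' hCH0
  have hp3 : ε * (JH - MH) ≤ ε * L := mul_le_mul_of_nonneg_left hCHL hε0'
  have hp4 : 0 ≤ ε * (JP - MP) := mul_nonneg hε0' hCP0
  -- finish
  rw [← mul_le_mul_iff_of_pos_right hl2]
  have hRHS : (ε * Real.logb 2 (Fintype.card Y) + H2 ε) * Real.log 2
      = ε * L + (negMulLog (1 - ε) + negMulLog ε) := by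
    rw [H2, Real.logb, Real.logb, Real.logb, hLdef]
    simp only [negMulLog]
    field_simp
    ring
  have hLHS : |condEnt P - condEnt Pm| * Real.log 2 = |(JP - MP) - (JM - MM)| := by
    rw [← abs_of_pos hl2, ← abs_mul, sub_mul, hA, hM]
  rw [hLHS, hRHS, abs_le]
  constructor <;> linarith
end

section
/- Let X and Y be finite alphabets and let W, W̃ : X → P(Y) be channels with d(W,W̃) ≤ ε for some ε ∈ (0,1). For arbitrary n ∈ ℕ, let U be an arbitrary finite set, P_U the uniform distribution on U, and E(xⁿ|u) an arbitrary stochastic encoder (E(xⁿ|u) ≥ 0 with ∑_{xⁿ∈Xⁿ} E(xⁿ|u) = 1 for each u). Define the joint distributions P_{UYⁿ}(u,yⁿ) = ∑_{xⁿ} Wⁿ(yⁿ|xⁿ)E(xⁿ|u)P_U(u) and P̃_{UYⁿ}(u,yⁿ) = ∑_{xⁿ} W̃ⁿ(yⁿ|xⁿ)E(xⁿ|u)P_U(u). Then |I(U;Yⁿ‖P) − I(U;Yⁿ‖P̃)| ≤ n·(4ε·log|Y| + 4H₂(ε)). -/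
open Real Finset

/-- Joint distribution on `U × Yⁿ` induced by the uniform distribution on `U`, a stochastic
encoder `E` and the `n`-fold memoryless extension of the channel `W`. -/
noncomputable def jointOut {X Y U : Type*} [Fintype X] [Fintype U] (n : ℕ)
    (W : X → Y → ℝ) (E : U → (Fin n → X) → ℝ) : U × (Fin n → Y) → ℝ :=
  fun p => ∑ xn : Fin n → X,
    (∏ i : Fin n, W (xn i) (p.2 i)) * E p.1 xn * ((Fintype.card U : ℝ))⁻¹


namespace MICC

noncomputable def f2 (x : ℝ) : ℝ := Real.negMulLog x / Real.log 2

lemma f2_eq (x : ℝ) : f2 x = -(x * Real.logb 2 x) := by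
  simp [f2, Real.negMulLog, Real.logb]; ring

lemma H2_eq (x : ℝ) : H2 x = f2 x + f2 (1 - x) := by
  simp [H2, f2_eq]; ring

lemma H2_eq' (x : ℝ) : H2 x = Real.binEntropy x / Real.log 2 := by
  rw [H2_eq, Real.binEntropy_eq_negMulLog_add_negMulLog_one_sub]
  simp [f2, add_div]

@[simp] lemma f2_zero : f2 0 = 0 := by simp [f2]
@[simp] lemma f2_one : f2 1 = 0 := by simp [f2]

lemma f2_nonneg {x : ℝ} (h1 : 0 ≤ x) (h2 : x ≤ 1) : 0 ≤ f2 x :=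
  div_nonneg (Real.negMulLog_nonneg h1 h2) (Real.log_nonneg one_le_two)

lemma f2_mul (x y : ℝ) : f2 (x * y) = y * f2 x + x * f2 y := by
  simp [f2, Real.negMulLog_mul, add_div, mul_div_assoc]

lemma f2_subadd {x y : ℝ} (hx : 0 ≤ x) (hy : 0 ≤ y) (hxy : x + y ≤ 1) :
    f2 (x + y) ≤ f2 x + f2 y := by
  rcases eq_or_lt_of_le hx with h | hx'
  · simp [← h]
  rcases eq_or_lt_of_le hy with h | hy'
  · simp [← h]
  rw [f2_eq, f2_eq, f2_eq]
  have h1 : Real.logb 2 x ≤ Real.logb 2 (x + y) :=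
    Real.logb_le_logb_of_le (by norm_num) hx' (by linarith)
  have h2 : Real.logb 2 y ≤ Real.logb 2 (x + y) :=
    Real.logb_le_logb_of_le (by norm_num) hy' (by linarith)
  nlinarith [mul_le_mul_of_nonneg_left h1 (le_of_lt hx'),
    mul_le_mul_of_nonneg_left h2 (le_of_lt hy')]

lemma f2_concave {x y a b : ℝ} (hx : 0 ≤ x) (hy : 0 ≤ y) (ha : 0 ≤ a) (hb : 0 ≤ b)
    (hab : a + b = 1) : a * f2 x + b * f2 y ≤ f2 (a * x + b * y) := by
  have h := Real.concaveOn_negMulLog.2 (Set.mem_Ici.2 hx) (Set.mem_Ici.2 hy) ha hb hab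
  simp only [smul_eq_mul] at h
  have hl : 0 < Real.log 2 := Real.log_pos one_lt_two
  simp only [f2, ← mul_div_assoc, ← add_div]
  exact div_le_div_of_nonneg_right h hl.le


noncomputable def ent {α : Type*} [Fintype α] (p : α → ℝ) : ℝ := ∑ a, f2 (p a)

variable {α : Type*} [Fintype α]

lemma prob_le_one {p : α → ℝ} (hp : IsProb p) (a : α) : p a ≤ 1 := by
  rw [← hp.2]
  exact Finset.single_le_sum (fun i _ => hp.1 i) (mem_univ a)

lemma ent_nonneg {p : α → ℝ} (hp : IsProb p) : 0 ≤ ent p :=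
  Finset.sum_nonneg fun a _ => f2_nonneg (hp.1 a) (prob_le_one hp a)

lemma ent_le_logb {p : α → ℝ} (hp : IsProb p) : ent p ≤ Real.logb 2 (Fintype.card α) := by
  have hne : Nonempty α := by
    by_contra h
    rw [not_nonempty_iff] at h
    have := hp.2
    simp [Finset.univ_eq_empty] at this
  have hN : (0:ℝ) < (Fintype.card α : ℝ) := by positivity
  set N : ℝ := (Fintype.card α : ℝ)
  have jensen := Real.concaveOn_negMulLog.le_map_sum (t := univ)
      (w := fun _ : α => N⁻¹) (p := p) (fun i _ => by positivity)
      (by simp [Finset.card_univ]; exact mul_inv_cancel₀ hN.ne') (fun i _ => Set.mem_Ici.2 (hp.1 i))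
  simp only [smul_eq_mul, ← Finset.mul_sum, hp.2, mul_one] at jensen
  have hval : Real.negMulLog N⁻¹ = N⁻¹ * Real.log N := by
    simp only [Real.negMulLog, Real.log_inv]; ring
  have h2 : ∑ a, Real.negMulLog (p a) ≤ Real.log N := by
    have h := mul_le_mul_of_nonneg_left jensen hN.le
    rw [← mul_assoc, mul_inv_cancel₀ hN.ne', one_mul, hval, ← mul_assoc,
      mul_inv_cancel₀ hN.ne', one_mul] at h
    exact h
  have hl : 0 < Real.log 2 := Real.log_pos one_lt_two
  rw [Real.logb]
  simp only [ent, f2, ← Finset.sum_div]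
  exact div_le_div_of_nonneg_right h2 hl.le

/-- One-sided Fannes inequality via the mixture trick. -/
lemma fannes_one_sided {p q : α → ℝ} (hp : IsProb p) (hq : IsProb q)
    {v : ℝ} (hv : (∑ a, |p a - q a|) = 2 * v) (hv1 : v < 1) :
    ent p - ent q ≤ v * Real.logb 2 (Fintype.card α) + (f2 v + f2 (1 - v)) := by
  classical
  set m : α → ℝ := fun a => min (p a) (q a) with hm
  set r : α → ℝ := fun a => p a - m a with hr
  set s : α → ℝ := fun a => q a - m a with hs
  have hr0 : ∀ a, 0 ≤ r a := fun a => by simp [hr, hm, min_le_left]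
  have hs0 : ∀ a, 0 ≤ s a := fun a => by simp [hs, hm, min_le_right]
  have habs : ∀ a, |p a - q a| = r a + s a := by
    intro a
    rcases le_total (p a) (q a) with h | h
    · rw [abs_of_nonpos (by linarith)]
      simp only [hr, hs, hm, min_eq_left h]; ring
    · rw [abs_of_nonneg (by linarith)]
      simp only [hr, hs, hm, min_eq_right h]; ring
  have hsum_rs : ∑ a, r a + ∑ a, s a = 2 * v := by
    rw [← Finset.sum_add_distrib, ← hv]
    exact Finset.sum_congr rfl fun a _ => (habs a).symm
  have hdiff : ∑ a, r a - ∑ a, s a = 0 := by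
    have : ∑ a, (r a - s a) = ∑ a, (p a - q a) := by
      apply Finset.sum_congr rfl; intro a _; simp only [hr, hs]; ring
    rw [← Finset.sum_sub_distrib, this, Finset.sum_sub_distrib, hp.2, hq.2, sub_self]
  have hsr : ∑ a, r a = v := by linarith
  have hss : ∑ a, s a = v := by linarith
  have hv0 : 0 ≤ v := by
    have : 0 ≤ ∑ a, r a := Finset.sum_nonneg fun a _ => hr0 a
    linarith
  have hmsum : ∑ a, m a = 1 - v := by
    have : ∑ a, (p a - r a) = 1 - v := by
      rw [Finset.sum_sub_distrib, hp.2, hsr]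
    rw [← this]; apply Finset.sum_congr rfl; intro a _; simp only [hr]; ring
  rcases eq_or_lt_of_le hv0 with h0 | hvpos
  · -- v = 0 : p = q
    have hreq : ∀ a, r a = 0 := by
      intro a
      have := Finset.sum_nonneg (fun i (_ : i ∈ univ.erase a) => hr0 i)
      have h1 : r a ≤ ∑ a, r a := Finset.single_le_sum (fun i _ => hr0 i) (mem_univ a)
      have := hr0 a; rw [hsr, ← h0] at h1; linarith
    have hseq : ∀ a, s a = 0 := by
      intro a
      have h1 : s a ≤ ∑ a, s a := Finset.single_le_sum (fun i _ => hs0 i) (mem_univ a)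
      have := hs0 a; rw [hss, ← h0] at h1; linarith
    have : p = q := by
      ext a
      have h1 := hreq a; have h2 := hseq a
      simp [hr, hs] at h1 h2; linarith
    rw [this, ← h0]
    simp
  · -- v > 0
    have h1v : 0 < 1 - v := by linarith
    set mh : α → ℝ := fun a => m a / (1 - v) with hmh
    set rh : α → ℝ := fun a => r a / v with hrh
    set sh : α → ℝ := fun a => s a / v with hsh
    have hm0 : ∀ a, 0 ≤ m a := fun a => le_min (hp.1 a) (hq.1 a)
    have hmhP : IsProb mh := by
      constructor
      · intro a; exact div_nonneg (hm0 a) h1v.le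
      · rw [hmh, ← Finset.sum_div, hmsum, div_self h1v.ne']
    have hrhP : IsProb rh := by
      constructor
      · intro a; exact div_nonneg (hr0 a) hvpos.le
      · rw [hrh, ← Finset.sum_div, hsr, div_self hvpos.ne']
    have hshP : IsProb sh := by
      constructor
      · intro a; exact div_nonneg (hs0 a) hvpos.le
      · rw [hsh, ← Finset.sum_div, hss, div_self hvpos.ne']
    have hpdec : ∀ a, p a = (1 - v) * mh a + v * rh a := by
      intro a
      have e1 : (1 - v) * (m a / (1 - v)) = m a := by field_simp
      have e2 : v * (r a / v) = r a := by field_simp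
      simp only [hmh, hrh, e1, e2]; simp only [hr]; ring
    have hqdec : ∀ a, q a = (1 - v) * mh a + v * sh a := by
      intro a
      have e1 : (1 - v) * (m a / (1 - v)) = m a := by field_simp
      have e2 : v * (s a / v) = s a := by field_simp
      simp only [hmh, hsh, e1, e2]; simp only [hs]; ring
    -- upper bound on ent p
    have hup : ent p ≤ (1 - v) * ent mh + v * ent rh + (f2 (1 - v) + f2 v) := by
      have hterm : ∀ a, f2 (p a) ≤
          ((1 - v) * f2 (mh a) + mh a * f2 (1 - v)) +
          (v * f2 (rh a) + rh a * f2 v) := by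
        intro a
        have h1 : f2 (p a) ≤ f2 ((1 - v) * mh a) + f2 (v * rh a) := by
          rw [hpdec a]
          exact f2_subadd (mul_nonneg h1v.le (hmhP.1 a))
            (mul_nonneg hvpos.le (hrhP.1 a)) (by rw [← hpdec a]; exact prob_le_one hp a)
        have h2 : f2 ((1 - v) * mh a) = mh a * f2 (1 - v) + (1 - v) * f2 (mh a) := f2_mul _ _
        have h3 : f2 (v * rh a) = rh a * f2 v + v * f2 (rh a) := f2_mul _ _
        rw [h2, h3] at h1; linarith
      calc ent p ≤ ∑ a, (((1 - v) * f2 (mh a) + mh a * f2 (1 - v)) +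
          (v * f2 (rh a) + rh a * f2 v)) := Finset.sum_le_sum fun a _ => hterm a
        _ = (1 - v) * ent mh + v * ent rh + (f2 (1 - v) + f2 v) := by
            simp only [Finset.sum_add_distrib, ← Finset.mul_sum, ← Finset.sum_mul,
              hmhP.2, hrhP.2, ent, one_mul, mul_one]
            ring
    -- lower bound on ent q
    have hlow : (1 - v) * ent mh + v * ent sh ≤ ent q := by
      have hterm : ∀ a, (1 - v) * f2 (mh a) + v * f2 (sh a) ≤ f2 (q a) := by
        intro a
        have := f2_concave (hmhP.1 a) (hshP.1 a) h1v.le hvpos.le (by ring)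
        rw [← hqdec a] at this; exact this
      calc (1 - v) * ent mh + v * ent sh
          = ∑ a, ((1 - v) * f2 (mh a) + v * f2 (sh a)) := by
            simp only [Finset.sum_add_distrib, ← Finset.mul_sum, ent]
        _ ≤ ∑ a, f2 (q a) := Finset.sum_le_sum fun a _ => hterm a
    have hre : ent rh ≤ Real.logb 2 (Fintype.card α) := ent_le_logb hrhP
    have hse : 0 ≤ ent sh := ent_nonneg hshP
    have := mul_le_mul_of_nonneg_left hre hvpos.le
    nlinarith

variable {α : Type*} [Fintype α]

lemma H2_nonneg {x : ℝ} (h0 : 0 ≤ x) (h1 : x ≤ 1) : 0 ≤ H2 x := by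
  rw [H2_eq]
  have := f2_nonneg h0 h1
  have := f2_nonneg (by linarith : (0:ℝ) ≤ 1 - x) (by linarith)
  linarith

lemma fannes_abs {p q : α → ℝ} (hp : IsProb p) (hq : IsProb q)
    {v : ℝ} (hv : (∑ a, |p a - q a|) = 2 * v) (hv1 : v < 1) :
    |ent p - ent q| ≤ v * Real.logb 2 (Fintype.card α) + (f2 v + f2 (1 - v)) := by
  rw [abs_sub_le_iff]
  constructor
  · exact fannes_one_sided hp hq hv hv1
  · refine fannes_one_sided hq hp ?_ hv1
    rw [← hv]; congr 1; ext a; rw [abs_sub_comm]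

/-- The Fannes bound is dominated by the final budget. -/
lemma fannes_budget {ε v : ℝ} (hε : ε ∈ Set.Ioo (0:ℝ) 1) (hv0 : 0 ≤ v) (hv : v ≤ ε / 2)
    {N : ℕ} (hN : 2 ≤ N) :
    v * Real.logb 2 N + (f2 v + f2 (1 - v)) ≤
      2 * ε * Real.logb 2 N + 2 * H2 ε := by
  obtain ⟨hε0, hε1⟩ := hε
  have hlogN : (1:ℝ) ≤ Real.logb 2 N := by
    rw [show (1:ℝ) = Real.logb 2 2 by simp]
    exact Real.logb_le_logb_of_le one_lt_two (by norm_num) (by exact_mod_cast hN)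
  have hlogN0 : (0:ℝ) ≤ Real.logb 2 N := by linarith
  have hvε : v ≤ ε := by linarith
  have h1 : v * Real.logb 2 N ≤ ε * Real.logb 2 N :=
    mul_le_mul_of_nonneg_right hvε hlogN0
  have hl2 : (0:ℝ) < Real.log 2 := Real.log_pos one_lt_two
  have hBv : f2 v + f2 (1 - v) = H2 v := (H2_eq v).symm
  -- key : H2 v ≤ ε * logb 2 N + 2 * H2 ε
  have hkey : H2 v ≤ ε * Real.logb 2 N + 2 * H2 ε := by
    rcases le_or_gt ε 2⁻¹ with hc | hc
    · -- ε ≤ 1/2 : monotonicity of binEntropy on [0, 1/2]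
      have hmono : Real.binEntropy v ≤ Real.binEntropy ε := by
        rcases eq_or_lt_of_le hvε with h | h
        · rw [h]
        · exact (Real.binEntropy_strictMonoOn ⟨hv0, by linarith⟩ ⟨hε0.le, hc⟩ h).le
      have : H2 v ≤ H2 ε := by
        rw [H2_eq', H2_eq']
        exact div_le_div_of_nonneg_right hmono hl2.le
      have hH2 : 0 ≤ H2 ε := H2_nonneg hε0.le hε1.le
      have hε' : 0 ≤ ε * Real.logb 2 N := by positivity
      linarith
    · -- ε > 1/2
      have hH2v : H2 v ≤ 1 := by
        rw [H2_eq']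
        rw [div_le_one hl2]
        exact Real.binEntropy_le_log_two
      -- H2 ε ≥ 1 - ε
      have hge : 1 - ε ≤ H2 ε := by
        rw [H2_eq]
        have h1 : 0 ≤ f2 ε := f2_nonneg hε0.le hε1.le
        have hlb : Real.logb 2 (1 - ε) ≤ -1 := by
          have h := Real.logb_le_logb_of_le one_lt_two
            (by linarith : (0:ℝ) < 1 - ε) (by linarith : 1 - ε ≤ 2⁻¹)
          simpa using h
        have h3 : 1 - ε ≤ f2 (1 - ε) := by
          rw [f2_eq]
          nlinarith [mul_le_mul_of_nonneg_left hlb (by linarith : (0:ℝ) ≤ 1 - ε)]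
        linarith
      have hεN : ε ≤ ε * Real.logb 2 N := by nlinarith
      linarith
  linarith

/-- Grouped Fannes inequality. -/
lemma grouped_fannes {Z A : Type*} [Fintype Z] [Fintype A] (hA : 2 ≤ Fintype.card A)
    {ε : ℝ} (hε : ε ∈ Set.Ioo (0:ℝ) 1)
    (p q : Z → A → ℝ) (hp : ∀ z a, 0 ≤ p z a) (hq : ∀ z a, 0 ≤ q z a)
    (hrow : ∀ z, ∑ a, q z a = ∑ a, p z a)
    (hl1 : ∀ z, ∑ a, |p z a - q z a| ≤ ε * ∑ a, p z a)
    (htot : ∑ z, ∑ a, p z a = 1) :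
    |∑ z, ∑ a, f2 (p z a) - ∑ z, ∑ a, f2 (q z a)| ≤
      2 * ε * Real.logb 2 (Fintype.card A) + 2 * H2 ε := by
  obtain ⟨hε0, hε1⟩ := hε
  set B : ℝ := 2 * ε * Real.logb 2 (Fintype.card A) + 2 * H2 ε with hB
  set s : Z → ℝ := fun z => ∑ a, p z a with hsdef
  have hs0 : ∀ z, 0 ≤ s z := fun z => Finset.sum_nonneg fun a _ => hp z a
  have hzbound : ∀ z, |∑ a, f2 (p z a) - ∑ a, f2 (q z a)| ≤ s z * B := by
    intro z
    rcases eq_or_lt_of_le (hs0 z) with h0 | hpos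
    · -- s z = 0 : p z = q z = 0
      have hp0 : ∀ a, p z a = 0 := by
        intro a
        have h1 : p z a ≤ s z := Finset.single_le_sum (fun i _ => hp z i) (mem_univ a)
        have := hp z a; rw [← h0] at h1; linarith
      have hq0 : ∀ a, q z a = 0 := by
        intro a
        have hqs : ∑ a, q z a = 0 := by rw [hrow z]; exact h0.symm
        have h1 : q z a ≤ ∑ a, q z a := Finset.single_le_sum (fun i _ => hq z i) (mem_univ a)
        have := hq z a; linarith
      simp only [hp0, hq0, f2_zero, Finset.sum_const_zero, sub_self, abs_zero, ← h0, zero_mul]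
      exact le_refl _
    · -- s z > 0
      set ph : A → ℝ := fun a => p z a / s z with hph
      set qh : A → ℝ := fun a => q z a / s z with hqh
      have hphP : IsProb ph := by
        constructor
        · intro a; exact div_nonneg (hp z a) (hs0 z)
        · rw [hph, ← Finset.sum_div]
          exact div_self hpos.ne'
      have hqhP : IsProb qh := by
        constructor
        · intro a; exact div_nonneg (hq z a) (hs0 z)
        · rw [hqh, ← Finset.sum_div, hrow z]
          exact div_self hpos.ne'
      set v : ℝ := (∑ a, |ph a - qh a|) / 2 with hvdef
      have hv0 : 0 ≤ v := by
        rw [hvdef]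
        have : 0 ≤ ∑ a, |ph a - qh a| := Finset.sum_nonneg fun a _ => abs_nonneg _
        linarith
      have hl1' : ∑ a, |ph a - qh a| ≤ ε := by
        have : ∑ a, |ph a - qh a| = (∑ a, |p z a - q z a|) / s z := by
          rw [Finset.sum_div]
          apply Finset.sum_congr rfl; intro a _
          rw [hph, hqh, div_sub_div_same, abs_div, abs_of_pos hpos]
        rw [this, div_le_iff₀ hpos]
        calc ∑ a, |p z a - q z a| ≤ ε * ∑ a, p z a := hl1 z
          _ = ε * s z := rfl
      have hvh : v ≤ ε / 2 := by rw [hvdef]; linarith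
      have hv1 : v < 1 := by linarith
      have hfan := fannes_abs hphP hqhP (v := v) (by rw [hvdef]; ring) hv1
      have hbud := fannes_budget ⟨hε0, hε1⟩ hv0 hvh hA
      -- rescale entropies
      have hentp : ∑ a, f2 (p z a) = f2 (s z) + s z * ent ph := by
        have : ∀ a, f2 (p z a) = ph a * f2 (s z) + s z * f2 (ph a) := by
          intro a
          rw [hph]
          have : p z a = s z * (p z a / s z) := by field_simp
          nth_rewrite 1 [this]
          rw [f2_mul]
        rw [Finset.sum_congr rfl fun a _ => this a, Finset.sum_add_distrib,
          ← Finset.sum_mul, ← Finset.mul_sum, hphP.2, one_mul, ent]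
      have hentq : ∑ a, f2 (q z a) = f2 (s z) + s z * ent qh := by
        have : ∀ a, f2 (q z a) = qh a * f2 (s z) + s z * f2 (qh a) := by
          intro a
          rw [hqh]
          have : q z a = s z * (q z a / s z) := by field_simp
          nth_rewrite 1 [this]
          rw [f2_mul]
        rw [Finset.sum_congr rfl fun a _ => this a, Finset.sum_add_distrib,
          ← Finset.sum_mul, ← Finset.mul_sum, hqhP.2, one_mul, ent]
      rw [hentp, hentq]
      have : f2 (s z) + s z * ent ph - (f2 (s z) + s z * ent qh)
          = s z * (ent ph - ent qh) := by ring
      rw [this, abs_mul, abs_of_pos hpos]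
      exact mul_le_mul_of_nonneg_left (hfan.trans hbud) hpos.le
  calc |∑ z, ∑ a, f2 (p z a) - ∑ z, ∑ a, f2 (q z a)|
      = |∑ z, (∑ a, f2 (p z a) - ∑ a, f2 (q z a))| := by rw [Finset.sum_sub_distrib]
    _ ≤ ∑ z, |∑ a, f2 (p z a) - ∑ a, f2 (q z a)| := Finset.abs_sum_le_sum_abs _ _
    _ ≤ ∑ z, s z * B := Finset.sum_le_sum fun z _ => hzbound z
    _ = B := by rw [← Finset.sum_mul, htot, one_mul]

lemma mutInf_eq_ent {U V : Type*} [Fintype U] [Fintype V] (P : U × V → ℝ)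
    (h0 : ∀ p, 0 ≤ P p) :
    mutInf P = ent (fun u => ∑ v, P (u, v)) + ent (fun v => ∑ u, P (u, v)) - ent P := by
  classical
  set A : U → ℝ := fun u => ∑ v, P (u, v) with hA
  set B : V → ℝ := fun v => ∑ u, P (u, v) with hB
  have key : ∀ u v, P (u, v) * Real.logb 2 (P (u, v) / (A u * B v))
      = P (u, v) * Real.logb 2 (P (u, v))
        - P (u, v) * Real.logb 2 (A u) - P (u, v) * Real.logb 2 (B v) := by
    intro u v
    rcases eq_or_lt_of_le (h0 (u, v)) with h | h
    · rw [← h]; ring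
    · have hAu : 0 < A u := lt_of_lt_of_le h
        (Finset.single_le_sum (fun i _ => h0 (u, i)) (mem_univ v))
      have hBv : 0 < B v := lt_of_lt_of_le h
        (Finset.single_le_sum (fun i _ => h0 (i, v)) (mem_univ u))
      rw [Real.logb_div h.ne' (by positivity), Real.logb_mul hAu.ne' hBv.ne']
      ring
  have e1 : mutInf P = ∑ u, ∑ v, (P (u, v) * Real.logb 2 (P (u, v))
      - P (u, v) * Real.logb 2 (A u) - P (u, v) * Real.logb 2 (B v)) := by
    rw [mutInf]
    exact Finset.sum_congr rfl fun u _ => Finset.sum_congr rfl fun v _ => key u v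
  have e2 : ∑ u, ∑ v, P (u, v) * Real.logb 2 (A u) = -ent A := by
    rw [ent, ← Finset.sum_neg_distrib]
    apply Finset.sum_congr rfl; intro u _
    rw [← Finset.sum_mul, f2_eq]
    ring_nf
    exact mul_comm _ _
  have e3 : ∑ u, ∑ v, P (u, v) * Real.logb 2 (B v) = -ent B := by
    rw [Finset.sum_comm, ent, ← Finset.sum_neg_distrib]
    apply Finset.sum_congr rfl; intro v _
    rw [← Finset.sum_mul, f2_eq]
    ring_nf
    exact mul_comm _ _
  have e4 : ∑ u, ∑ v, P (u, v) * Real.logb 2 (P (u, v)) = -ent P := by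
    rw [ent, ← Finset.sum_neg_distrib, Fintype.sum_prod_type]
    apply Finset.sum_congr rfl; intro u _
    apply Finset.sum_congr rfl; intro v _
    rw [f2_eq]; ring
  rw [e1]
  simp only [Finset.sum_sub_distrib]
  rw [e2, e3, e4]
  ring

section Hyb
variable {X Y U : Type*} [Fintype X] [Fintype Y] [Fintype U]

/-- Hybrid joint distribution: channel `W` on the first `m` coordinates, `W'` on the rest. -/
noncomputable def hyb (n m : ℕ) (W W' : X → Y → ℝ) (E : U → (Fin n → X) → ℝ) :
    U × (Fin n → Y) → ℝ :=
  fun p => ∑ xn : Fin n → X,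
    (∏ i : Fin n, (if (i : ℕ) < m then W else W') (xn i) (p.2 i)) * E p.1 xn *
      ((Fintype.card U : ℝ))⁻¹

variable {W W' : X → Y → ℝ} {n : ℕ} {E : U → (Fin n → X) → ℝ}

lemma hyb_top : hyb n n W W' E = jointOut n W E := by
  funext p
  simp only [hyb, jointOut, Fin.is_lt, ite_true]

lemma hyb_bot : hyb n 0 W W' E = jointOut n W' E := by
  funext p
  simp only [hyb, jointOut, Nat.not_lt_zero, ite_false]

lemma hyb_nonneg (hW : IsChannel W) (hW' : IsChannel W')
    (hE : ∀ u, (∀ xn, 0 ≤ E u xn) ∧ ∑ xn : Fin n → X, E u xn = 1) (m : ℕ)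
    (p : U × (Fin n → Y)) : 0 ≤ hyb n m W W' E p := by
  apply Finset.sum_nonneg; intro xn _
  apply mul_nonneg (mul_nonneg ?_ ((hE p.1).1 xn)) (by positivity)
  apply Finset.prod_nonneg; intro i _
  by_cases h : (i : ℕ) < m
  · rw [if_pos h]; exact (hW (xn i)).1 _
  · rw [if_neg h]; exact (hW' (xn i)).1 _

lemma hyb_margU (hW : IsChannel W) (hW' : IsChannel W')
    (hE : ∀ u, (∀ xn, 0 ≤ E u xn) ∧ ∑ xn : Fin n → X, E u xn = 1) (m : ℕ) (u : U) :
    ∑ yn : Fin n → Y, hyb n m W W' E (u, yn) = (Fintype.card U : ℝ)⁻¹ := by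
  simp only [hyb]
  rw [Finset.sum_comm]
  have hxn : ∀ xn : Fin n → X,
      ∑ yn : Fin n → Y, (∏ i : Fin n, (if (i : ℕ) < m then W else W') (xn i) (yn i)) *
        E u xn * ((Fintype.card U : ℝ))⁻¹ = E u xn * ((Fintype.card U : ℝ))⁻¹ := by
    intro xn
    rw [← Finset.sum_mul, ← Finset.sum_mul]
    have : ∑ yn : Fin n → Y, ∏ i : Fin n, (if (i : ℕ) < m then W else W') (xn i) (yn i)
        = ∏ i : Fin n, ∑ y : Y, (if (i : ℕ) < m then W else W') (xn i) y :=
      (Fintype.prod_sum _).symm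
    rw [this]
    have : ∀ i : Fin n, ∑ y : Y, (if (i : ℕ) < m then W else W') (xn i) y = 1 := by
      intro i
      by_cases h : (i : ℕ) < m
      · rw [if_pos h]; exact (hW (xn i)).2
      · rw [if_neg h]; exact (hW' (xn i)).2
    rw [Finset.prod_congr rfl fun i _ => this i, Finset.prod_const_one, one_mul]
  rw [Finset.sum_congr rfl fun xn _ => hxn xn, ← Finset.sum_mul, (hE u).2, one_mul]

lemma hyb_sum [Nonempty U] (hW : IsChannel W) (hW' : IsChannel W')
    (hE : ∀ u, (∀ xn, 0 ≤ E u xn) ∧ ∑ xn : Fin n → X, E u xn = 1) (m : ℕ) :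
    ∑ p : U × (Fin n → Y), hyb n m W W' E p = 1 := by
  rw [Fintype.sum_prod_type]
  rw [Finset.sum_congr rfl fun u _ => hyb_margU hW hW' hE m u, Finset.sum_const,
    Finset.card_univ, nsmul_eq_mul]
  have : (Fintype.card U : ℝ) ≠ 0 := by
    simp [Fintype.card_ne_zero]
  field_simp

end Hyb

/-- Splitting a sum over `Fin n → Y` at coordinate `k`. -/
lemma sum_split {Y : Type*} [Fintype Y] {n : ℕ} (k : Fin n) (F : (Fin n → Y) → ℝ) :
    ∑ yn : Fin n → Y, F yn =
      ∑ z : {j : Fin n // j ≠ k} → Y, ∑ a : Y, F ((Equiv.funSplitAt k Y).symm (a, z)) := by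
  rw [← Equiv.sum_comp (Equiv.funSplitAt k Y).symm F, Fintype.sum_prod_type]
  exact Finset.sum_comm

/-- Row sums and ℓ¹ bounds for mixtures of channel rows. -/
lemma chan_rows {X Y : Type*} [Fintype Y] {W W' : X → Y → ℝ}
    (hW : IsChannel W) (hW' : IsChannel W') {ε : ℝ} (hε0 : 0 ≤ ε)
    (hd' : ∀ x, ∑ y, |W x y - W' x y| ≤ ε)
    {I : Type*} [Fintype I] (G : I → X) (T : I → ℝ) (hT : ∀ i, 0 ≤ T i) :
    (∑ a : Y, ∑ i, W' (G i) a * T i = ∑ a : Y, ∑ i, W (G i) a * T i) ∧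
    (∑ a : Y, |(∑ i, W (G i) a * T i) - ∑ i, W' (G i) a * T i| ≤
      ε * ∑ a : Y, ∑ i, W (G i) a * T i) := by
  have hrow : ∀ (V : X → Y → ℝ), IsChannel V →
      ∑ a : Y, ∑ i, V (G i) a * T i = ∑ i, T i := by
    intro V hV
    rw [Finset.sum_comm]
    apply Finset.sum_congr rfl; intro i _
    rw [← Finset.sum_mul, (hV (G i)).2, one_mul]
  refine ⟨by rw [hrow W hW, hrow W' hW'], ?_⟩
  rw [hrow W hW]
  calc ∑ a : Y, |(∑ i, W (G i) a * T i) - ∑ i, W' (G i) a * T i|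
      = ∑ a : Y, |∑ i, (W (G i) a - W' (G i) a) * T i| := by
        apply Finset.sum_congr rfl; intro a _
        rw [← Finset.sum_sub_distrib]
        congr 1
        apply Finset.sum_congr rfl; intro i _
        ring
    _ ≤ ∑ a : Y, ∑ i, |W (G i) a - W' (G i) a| * T i := by
        apply Finset.sum_le_sum; intro a _
        refine (Finset.abs_sum_le_sum_abs _ _).trans ?_
        apply Finset.sum_le_sum; intro i _
        rw [abs_mul, abs_of_nonneg (hT i)]
    _ = ∑ i, (∑ a : Y, |W (G i) a - W' (G i) a|) * T i := by
        rw [Finset.sum_comm]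
        apply Finset.sum_congr rfl; intro i _
        rw [Finset.sum_mul]
    _ ≤ ∑ i, ε * T i := by
        apply Finset.sum_le_sum; intro i _
        exact mul_le_mul_of_nonneg_right (hd' (G i)) (hT i)
    _ = ε * ∑ i, T i := by rw [Finset.mul_sum]

lemma step_bound {X Y U : Type*} [Fintype X] [Fintype Y] [Fintype U] [Nonempty U]
    {W W' : X → Y → ℝ} (hW : IsChannel W) (hW' : IsChannel W')
    {ε : ℝ} (hε : ε ∈ Set.Ioo (0:ℝ) 1)
    (hd' : ∀ x, ∑ y, |W x y - W' x y| ≤ ε) (hY : 2 ≤ Fintype.card Y)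
    {n : ℕ} {E : U → (Fin n → X) → ℝ}
    (hE : ∀ u, (∀ xn, 0 ≤ E u xn) ∧ ∑ xn : Fin n → X, E u xn = 1)
    (m : ℕ) (hm : m < n) :
    |mutInf (hyb n (m+1) W W' E) - mutInf (hyb n m W W' E)| ≤
      4 * ε * Real.logb 2 (Fintype.card Y) + 4 * H2 ε := by
  classical
  set k : Fin n := ⟨m, hm⟩ with hk
  set e := Equiv.funSplitAt k Y with he
  set c : ℝ := ((Fintype.card U : ℝ))⁻¹ with hc
  set P := hyb n (m+1) W W' E with hPdef
  set Q := hyb n m W W' E with hQdef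
  set Rst : U → ({j : Fin n // j ≠ k} → Y) → (Fin n → X) → ℝ := fun u z xn =>
    (∏ j : {j : Fin n // j ≠ k}, (if ((j : Fin n) : ℕ) < m then W else W') (xn j) (z j)) *
      E u xn * c with hRdef
  have hkm : (k : ℕ) = m := rfl
  have hynk : ∀ (a : Y) (z : {j : Fin n // j ≠ k} → Y), e.symm (a, z) k = a := by
    intro a z; simp [he]
  have hynj : ∀ (a : Y) (z : {j : Fin n // j ≠ k} → Y) (j : {j : Fin n // j ≠ k}),
      e.symm (a, z) (j : Fin n) = z j := by
    intro a z j; simp [he, j.2]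
  have hsplit : ∀ (M : ℕ) (u : U) (z : {j : Fin n // j ≠ k} → Y) (a : Y),
      hyb n M W W' E (u, e.symm (a, z)) =
      ∑ xn : Fin n → X, (if (k : ℕ) < M then W else W') (xn k) a *
        ((∏ j : {j : Fin n // j ≠ k}, (if ((j : Fin n) : ℕ) < M then W else W') (xn j) (z j)) *
          E u xn * c) := by
    intro M u z a
    simp only [hyb]
    apply Finset.sum_congr rfl; intro xn _
    have hp : (∏ i : Fin n, (if (i:ℕ) < M then W else W') (xn i) (e.symm (a, z) i)) =
        (if (k:ℕ) < M then W else W') (xn k) a *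
        (∏ j : {j : Fin n // j ≠ k},
          (if ((j : Fin n):ℕ) < M then W else W') (xn j) (z j)) := by
      rw [Fintype.prod_eq_mul_prod_compl k, hynk a z]
      congr 1
      rw [Finset.prod_subtype (p := fun j => j ≠ k) ({k}ᶜ : Finset (Fin n))
        (fun j => by simp)
        (fun i => (if (i:ℕ) < M then W else W') (xn i) (e.symm (a, z) i))]
      exact Finset.prod_congr rfl fun j _ => by rw [hynj a z j]
    rw [hp]
    ring
  have hprodeq : ∀ (z : {j : Fin n // j ≠ k} → Y) (xn : Fin n → X),
      (∏ j : {j : Fin n // j ≠ k}, (if ((j : Fin n) : ℕ) < m + 1 then W else W') (xn j) (z j)) =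
      ∏ j : {j : Fin n // j ≠ k}, (if ((j : Fin n) : ℕ) < m then W else W') (xn j) (z j) := by
    intro z xn
    apply Finset.prod_congr rfl; intro j _
    have hne : ((j : Fin n) : ℕ) ≠ m := by
      intro h
      exact j.2 (Fin.ext h)
    by_cases hlt : ((j : Fin n) : ℕ) < m
    · rw [if_pos hlt, if_pos (by omega)]
    · rw [if_neg hlt, if_neg (by omega)]
  have hPs : ∀ (u : U) (z : {j : Fin n // j ≠ k} → Y) (a : Y),
      P (u, e.symm (a, z)) = ∑ xn : Fin n → X, W (xn k) a * Rst u z xn := by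
    intro u z a
    rw [hPdef, hsplit (m+1) u z a]
    simp only [hRdef]
    apply Finset.sum_congr rfl; intro xn _
    rw [if_pos (show (k : ℕ) < m + 1 by omega), hprodeq z xn]
  have hQs : ∀ (u : U) (z : {j : Fin n // j ≠ k} → Y) (a : Y),
      Q (u, e.symm (a, z)) = ∑ xn : Fin n → X, W' (xn k) a * Rst u z xn := by
    intro u z a
    rw [hQdef, hsplit m u z a]
    simp only [hRdef]
    apply Finset.sum_congr rfl; intro xn _
    rw [if_neg (show ¬ (k : ℕ) < m by omega)]
  have hR0 : ∀ u z xn, 0 ≤ Rst u z xn := by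
    intro u z xn
    simp only [hRdef]
    apply mul_nonneg (mul_nonneg ?_ ((hE u).1 xn)) (by rw [hc]; positivity)
    apply Finset.prod_nonneg; intro j _
    by_cases h : ((j : Fin n) : ℕ) < m
    · rw [if_pos h]; exact (hW (xn j)).1 _
    · rw [if_neg h]; exact (hW' (xn j)).1 _
  have hPnn : ∀ p, 0 ≤ P p := hyb_nonneg hW hW' hE (m+1)
  have hQnn : ∀ p, 0 ≤ Q p := hyb_nonneg hW hW' hE m
  have hε0 : (0:ℝ) ≤ ε := hε.1.le
  -- App 1 : joint entropies
  set pj : (U × ({j : Fin n // j ≠ k} → Y)) → Y → ℝ :=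
    fun z a => P (z.1, e.symm (a, z.2)) with hpj
  set qj : (U × ({j : Fin n // j ≠ k} → Y)) → Y → ℝ :=
    fun z a => Q (z.1, e.symm (a, z.2)) with hqj
  have hrow1 : ∀ z, ∑ a, qj z a = ∑ a, pj z a := by
    intro z
    simp only [hpj, hqj]
    rw [Finset.sum_congr rfl fun a _ => hPs z.1 z.2 a,
        Finset.sum_congr rfl fun a _ => hQs z.1 z.2 a]
    exact (chan_rows hW hW' hε0 hd' (fun xn => xn k) (Rst z.1 z.2) (hR0 z.1 z.2)).1
  have hl11 : ∀ z, ∑ a, |pj z a - qj z a| ≤ ε * ∑ a, pj z a := by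
    intro z
    simp only [hpj, hqj]
    have h2 := (chan_rows hW hW' hε0 hd' (fun xn => xn k) (Rst z.1 z.2) (hR0 z.1 z.2)).2
    calc ∑ a, |P (z.1, e.symm (a, z.2)) - Q (z.1, e.symm (a, z.2))|
        = ∑ a : Y, |(∑ xn : Fin n → X, W (xn k) a * Rst z.1 z.2 xn) -
            ∑ xn : Fin n → X, W' (xn k) a * Rst z.1 z.2 xn| := by
          apply Finset.sum_congr rfl; intro a _; rw [hPs, hQs]
      _ ≤ ε * ∑ a : Y, ∑ xn : Fin n → X, W (xn k) a * Rst z.1 z.2 xn := h2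
      _ = ε * ∑ a, P (z.1, e.symm (a, z.2)) := by
          congr 1; apply Finset.sum_congr rfl; intro a _; rw [hPs]
  have hmargP : ∀ u, ∑ z : {j : Fin n // j ≠ k} → Y, ∑ a, P (u, e.symm (a, z)) = c := by
    intro u
    rw [← sum_split k (fun yn => P (u, yn))]
    rw [hPdef]
    exact hyb_margU hW hW' hE (m+1) u
  have hmargQ : ∀ u, ∑ z : {j : Fin n // j ≠ k} → Y, ∑ a, Q (u, e.symm (a, z)) = c := by
    intro u
    rw [← sum_split k (fun yn => Q (u, yn))]
    rw [hQdef]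
    exact hyb_margU hW hW' hE m u
  have hcardU : (Fintype.card U : ℝ) ≠ 0 := by
    have : Fintype.card U ≠ 0 := Fintype.card_ne_zero
    exact_mod_cast this
  have htot1 : ∑ z, ∑ a, pj z a = 1 := by
    simp only [hpj]
    rw [Fintype.sum_prod_type]
    rw [Finset.sum_congr rfl fun u _ => hmargP u, Finset.sum_const, Finset.card_univ,
      nsmul_eq_mul, hc]
    field_simp
  have happ1 := grouped_fannes hY hε pj qj (fun z a => hPnn _) (fun z a => hQnn _)
    hrow1 hl11 htot1
  have hentP : ent P = ∑ z, ∑ a, f2 (pj z a) := by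
    simp only [hpj]
    rw [ent, Fintype.sum_prod_type]
    conv_rhs => rw [Fintype.sum_prod_type]
    apply Finset.sum_congr rfl; intro u _
    exact sum_split k (fun yn => f2 (P (u, yn)))
  have hentQ : ent Q = ∑ z, ∑ a, f2 (qj z a) := by
    simp only [hqj]
    rw [ent, Fintype.sum_prod_type]
    conv_rhs => rw [Fintype.sum_prod_type]
    apply Finset.sum_congr rfl; intro u _
    exact sum_split k (fun yn => f2 (Q (u, yn)))
  have hA1 : |ent P - ent Q| ≤ 2 * ε * Real.logb 2 (Fintype.card Y) + 2 * H2 ε := by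
    rw [hentP, hentQ]; exact happ1
  -- App 2 : output marginal entropies
  set pm : ({j : Fin n // j ≠ k} → Y) → Y → ℝ :=
    fun z a => ∑ u, P (u, e.symm (a, z)) with hpm
  set qm : ({j : Fin n // j ≠ k} → Y) → Y → ℝ :=
    fun z a => ∑ u, Q (u, e.symm (a, z)) with hqm
  have hPm : ∀ z a, pm z a = ∑ w : U × (Fin n → X), W (w.2 k) a * Rst w.1 z w.2 := by
    intro z a
    simp only [hpm]
    rw [Finset.sum_congr rfl fun u _ => hPs u z a]
    exact (Fintype.sum_prod_type
      (f := fun w : U × (Fin n → X) => W (w.2 k) a * Rst w.1 z w.2)).symm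
  have hQm : ∀ z a, qm z a = ∑ w : U × (Fin n → X), W' (w.2 k) a * Rst w.1 z w.2 := by
    intro z a
    simp only [hqm]
    rw [Finset.sum_congr rfl fun u _ => hQs u z a]
    exact (Fintype.sum_prod_type
      (f := fun w : U × (Fin n → X) => W' (w.2 k) a * Rst w.1 z w.2)).symm
  have hrow2 : ∀ z, ∑ a, qm z a = ∑ a, pm z a := by
    intro z
    rw [Finset.sum_congr rfl fun a _ => hPm z a, Finset.sum_congr rfl fun a _ => hQm z a]
    exact (chan_rows hW hW' hε0 hd' (fun w : U × (Fin n → X) => w.2 k)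
      (fun w => Rst w.1 z w.2) (fun w => hR0 w.1 z w.2)).1
  have hl12 : ∀ z, ∑ a, |pm z a - qm z a| ≤ ε * ∑ a, pm z a := by
    intro z
    have h2 := (chan_rows hW hW' hε0 hd' (fun w : U × (Fin n → X) => w.2 k)
      (fun w => Rst w.1 z w.2) (fun w => hR0 w.1 z w.2)).2
    calc ∑ a, |pm z a - qm z a|
        = ∑ a : Y, |(∑ w : U × (Fin n → X), W (w.2 k) a * Rst w.1 z w.2) -
            ∑ w : U × (Fin n → X), W' (w.2 k) a * Rst w.1 z w.2| := by
          apply Finset.sum_congr rfl; intro a _; rw [hPm, hQm]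
      _ ≤ ε * ∑ a : Y, ∑ w : U × (Fin n → X), W (w.2 k) a * Rst w.1 z w.2 := h2
      _ = ε * ∑ a, pm z a := by
          congr 1; apply Finset.sum_congr rfl; intro a _; rw [hPm]
  have htot2 : ∑ z, ∑ a, pm z a = 1 := by
    simp only [hpm]
    calc ∑ z : {j : Fin n // j ≠ k} → Y, ∑ a : Y, ∑ u, P (u, e.symm (a, z))
        = ∑ z : {j : Fin n // j ≠ k} → Y, ∑ u, ∑ a : Y, P (u, e.symm (a, z)) := by
          exact Finset.sum_congr rfl fun z _ => Finset.sum_comm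
      _ = ∑ u, ∑ z : {j : Fin n // j ≠ k} → Y, ∑ a : Y, P (u, e.symm (a, z)) :=
          Finset.sum_comm
      _ = ∑ u : U, c := Finset.sum_congr rfl fun u _ => hmargP u
      _ = 1 := by
          rw [Finset.sum_const, Finset.card_univ, nsmul_eq_mul, hc]
          field_simp
  have happ2 := grouped_fannes hY hε pm qm
    (fun z a => Finset.sum_nonneg fun u _ => hPnn _)
    (fun z a => Finset.sum_nonneg fun u _ => hQnn _)
    hrow2 hl12 htot2
  have hentmP : ent (fun yn => ∑ u, P (u, yn)) = ∑ z, ∑ a, f2 (pm z a) := by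
    simp only [hpm]
    rw [ent]
    exact sum_split k (fun yn => f2 (∑ u, P (u, yn)))
  have hentmQ : ent (fun yn => ∑ u, Q (u, yn)) = ∑ z, ∑ a, f2 (qm z a) := by
    simp only [hqm]
    rw [ent]
    exact sum_split k (fun yn => f2 (∑ u, Q (u, yn)))
  have hA2 : |ent (fun yn => ∑ u, P (u, yn)) - ent (fun yn => ∑ u, Q (u, yn))| ≤
      2 * ε * Real.logb 2 (Fintype.card Y) + 2 * H2 ε := by
    rw [hentmP, hentmQ]; exact happ2
  -- assemble
  have hdP := mutInf_eq_ent P hPnn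
  have hdQ := mutInf_eq_ent Q hQnn
  have hmargUeq : (fun u => ∑ yn, P (u, yn)) = (fun u => ∑ yn, Q (u, yn)) := by
    funext u
    rw [hPdef, hQdef, hyb_margU hW hW' hE (m+1) u, hyb_margU hW hW' hE m u]
  have hkey : mutInf P - mutInf Q =
      (ent (fun yn => ∑ u, P (u, yn)) - ent (fun yn => ∑ u, Q (u, yn))) -
      (ent P - ent Q) := by
    rw [hdP, hdQ, hmargUeq]; ring
  calc |mutInf P - mutInf Q|
      = |(ent (fun yn => ∑ u, P (u, yn)) - ent (fun yn => ∑ u, Q (u, yn))) -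
          (ent P - ent Q)| := by rw [hkey]
    _ ≤ |ent (fun yn => ∑ u, P (u, yn)) - ent (fun yn => ∑ u, Q (u, yn))| +
          |ent P - ent Q| := abs_sub _ _
    _ ≤ (2 * ε * Real.logb 2 (Fintype.card Y) + 2 * H2 ε) +
          (2 * ε * Real.logb 2 (Fintype.card Y) + 2 * H2 ε) := add_le_add hA2 hA1
    _ = 4 * ε * Real.logb 2 (Fintype.card Y) + 4 * H2 ε := by ring

end MICC

open MICC in
/-- continuity of multi-letter mutual information in the channel. -/
theorem mutual_information_channel_continuity {X Y U : Type*}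
    [Fintype X] [Fintype Y] [Fintype U] [Nonempty U]
    {ε : ℝ} (hε : ε ∈ Set.Ioo (0 : ℝ) 1)
    (W W' : X → Y → ℝ) (hW : IsChannel W) (hW' : IsChannel W')
    (hd : dChan W W' ≤ ε)
    (n : ℕ) (E : U → (Fin n → X) → ℝ)
    (hE : ∀ u, (∀ xn, 0 ≤ E u xn) ∧ ∑ xn : Fin n → X, E u xn = 1) :
    |mutInf (jointOut n W E) - mutInf (jointOut n W' E)| ≤
      (n : ℝ) * (4 * ε * Real.logb 2 (Fintype.card Y) + 4 * H2 ε) := by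
  classical
  obtain ⟨hε0, hε1⟩ := hε
  rcases Nat.eq_zero_or_pos n with hn | hn
  · subst hn
    have hjoint : jointOut 0 W E = jointOut 0 W' E := by
      funext p
      simp [jointOut]
    rw [hjoint, sub_self, abs_zero]
    simp
  · have hXne : Nonempty X := by
      by_contra h
      rw [not_nonempty_iff] at h
      obtain ⟨u⟩ := ‹Nonempty U›
      have h1 := (hE u).2
      haveI : IsEmpty (Fin n → X) := ⟨fun f => h.false (f ⟨0, hn⟩)⟩
      rw [Finset.univ_eq_empty, Finset.sum_empty] at h1
      exact one_ne_zero h1.symm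
    obtain ⟨x0⟩ := hXne
    have hYne : Nonempty Y := by
      by_contra h
      rw [not_nonempty_iff] at h
      have h1 := (hW x0).2
      rw [Finset.univ_eq_empty, Finset.sum_empty] at h1
      exact one_ne_zero h1.symm
    rcases lt_or_ge (Fintype.card Y) 2 with hY | hY
    · -- |Y| = 1 : the two channels coincide
      have hcard : Fintype.card Y = 1 := by
        have := Fintype.card_pos (α := Y)
        omega
      haveI hsub : Subsingleton Y := Fintype.card_le_one_iff_subsingleton.mp hcard.le
      have hWW : W = W' := by
        funext x y
        haveI : Unique Y := uniqueOfSubsingleton y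
        have h1 : W x y = 1 := by
          have h := (hW x).2; rw [Fintype.sum_unique] at h
          rw [Subsingleton.elim y default]; exact h
        have h2 : W' x y = 1 := by
          have h := (hW' x).2; rw [Fintype.sum_unique] at h
          rw [Subsingleton.elim y default]; exact h
        rw [h1, h2]
      rw [hWW, sub_self, abs_zero, hcard]
      have hH2 : 0 ≤ H2 ε := H2_nonneg hε0.le hε1.le
      have : (0:ℝ) ≤ (n:ℝ) := by positivity
      simp only [Nat.cast_one, Real.logb_one, mul_zero]
      nlinarith
    · -- main case
      have hd' : ∀ x, ∑ y, |W x y - W' x y| ≤ ε := by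
        intro x
        refine le_trans ?_ hd
        rw [dChan]
        exact le_ciSup (Set.Finite.bddAbove (Set.finite_range
          (fun x => ∑ y, |W x y - W' x y|))) x
      set f : ℕ → ℝ := fun m => mutInf (hyb n m W W' E) with hf
      have hstep : ∀ i ∈ Finset.range n, dist (f i) (f (i+1)) ≤
          4 * ε * Real.logb 2 (Fintype.card Y) + 4 * H2 ε := by
        intro i hi
        rw [Real.dist_eq, abs_sub_comm]
        exact step_bound hW hW' ⟨hε0, hε1⟩ hd' hY hE i (Finset.mem_range.mp hi)
      have htel : dist (f 0) (f n) ≤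
          (n : ℝ) * (4 * ε * Real.logb 2 (Fintype.card Y) + 4 * H2 ε) := by
        refine (dist_le_range_sum_dist f n).trans ?_
        refine (Finset.sum_le_sum hstep).trans ?_
        rw [Finset.sum_const, Finset.card_range, nsmul_eq_mul]
      have hfn : f n = mutInf (jointOut n W E) := by
        show mutInf (hyb n n W W' E) = _
        rw [hyb_top]
      have hf0 : f 0 = mutInf (jointOut n W' E) := by
        show mutInf (hyb n 0 W W' E) = _
        rw [hyb_bot]
      calc |mutInf (jointOut n W E) - mutInf (jointOut n W' E)|
          = dist (f 0) (f n) := by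
            rw [hfn, hf0, Real.dist_eq, abs_sub_comm]
        _ ≤ (n : ℝ) * (4 * ε * Real.logb 2 (Fintype.card Y) + 4 * H2 ε) := htel
end

section
/- Let ε ∈ (0,1) and let {W_{s₁}}_{s₁∈S₁} and {W_{s₂}}_{s₂∈S₂} be two families of channels X → P(Y) over a common finite input alphabet X and output alphabet Y, with sup_{s₂∈S₂} inf_{s₁∈S₁} d(W_{s₁},W_{s₂}) < ε and sup_{s₁∈S₁} inf_{s₂∈S₂} d(W_{s₁},W_{s₂}) < ε. Then for every n ∈ ℕ, every finite set U with uniform distribution P_U, and every stochastic encoder E(xⁿ|u), letting P^{s}(u,yⁿ) = ∑_{xⁿ} W_sⁿ(yⁿ|xⁿ)E(xⁿ|u)P_U(u), it holds that |inf_{s₁∈S₁} I(U;Yⁿ‖P^{s₁}) − inf_{s₂∈S₂} I(U;Yⁿ‖P^{s₂})| ≤ n·(4ε·log|Y| + 4H₂(ε)), and the same bound holds with inf replaced by sup. -/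
open Real Finset

noncomputable def eta (x : ℝ) : ℝ := -(x * Real.logb 2 x)

lemma eta_nonneg {x : ℝ} (h0 : 0 ≤ x) (h1 : x ≤ 1) : 0 ≤ eta x := by
  have := Real.logb_nonpos (b := 2) one_lt_two h0 h1
  unfold eta; nlinarith

lemma log2_pos : (0:ℝ) < Real.log 2 := Real.log_pos one_lt_two

lemma mul_log_sub_antitone : AntitoneOn (fun x : ℝ => x * Real.log x - x) (Set.Icc 0 1) := by
  apply antitoneOn_of_deriv_nonpos (convex_Icc 0 1)
  · exact (Real.continuous_mul_log.sub continuous_id).continuousOn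
  · intro x hx
    rw [interior_Icc] at hx
    exact ((Real.hasDerivAt_mul_log (ne_of_gt hx.1)).sub (hasDerivAt_id' x)).differentiableAt.differentiableWithinAt
  · intro x hx
    rw [interior_Icc] at hx
    have hd := ((Real.hasDerivAt_mul_log (ne_of_gt hx.1)).sub (hasDerivAt_id' x)).deriv
    rw [show deriv (fun x : ℝ => x * Real.log x - x) x = Real.log x + 1 - 1 from hd]
    have := Real.log_nonpos (le_of_lt hx.1) (le_of_lt hx.2)
    linarith

lemma eta_subadd {a t : ℝ} (ha : 0 ≤ a) (ht : 0 ≤ t) (h1 : a + t ≤ 1) :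
    eta (a + t) ≤ eta a + eta t := by
  rcases eq_or_lt_of_le ht with h | h
  · simp [← h, eta]
  rcases eq_or_lt_of_le ha with h2 | h2
  · simp [← h2, eta]
  have h1' : a * Real.logb 2 a ≤ a * Real.logb 2 (a+t) :=
    mul_le_mul_of_nonneg_left (Real.logb_le_logb_of_le (by norm_num) h2 (by linarith)) ha
  have h2' : t * Real.logb 2 t ≤ t * Real.logb 2 (a+t) :=
    mul_le_mul_of_nonneg_left (Real.logb_le_logb_of_le (by norm_num) h (by linarith)) ht
  unfold eta; nlinarith [((by ring) : (a+t) * Real.logb 2 (a+t) = a * Real.logb 2 (a+t) + t * Real.logb 2 (a+t))]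

lemma eta_drop {a t : ℝ} (ha : 0 ≤ a) (ht : 0 ≤ t) (h1 : a + t ≤ 1) :
    eta a ≤ eta (a + t) + t / Real.log 2 := by
  have hmono := mul_log_sub_antitone (Set.mem_Icc.mpr ⟨ha, by linarith⟩)
    (Set.mem_Icc.mpr ⟨by linarith, h1⟩) (by linarith : a ≤ a + t)
  simp only at hmono
  unfold eta
  rw [Real.logb, Real.logb]
  have hl2 := log2_pos
  calc -(a * (Real.log a / Real.log 2)) = (-(a * Real.log a)) / Real.log 2 := by ring
    _ ≤ (-((a+t) * Real.log (a+t)) + t) / Real.log 2 := by gcongr; linarith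
    _ = -((a+t) * (Real.log (a+t) / Real.log 2)) + t / Real.log 2 := by ring

-- (a)
lemma eta_diff_le {a b : ℝ} (ha0 : 0 ≤ a) (ha1 : a ≤ 1) (hb0 : 0 ≤ b) (hb1 : b ≤ 1) :
    |eta a - eta b| ≤ eta |a - b| + |a - b| / Real.log 2 := by
  wlog hab : a ≤ b generalizing a b
  · rw [abs_sub_comm, abs_sub_comm a b]; exact this hb0 hb1 ha0 ha1 (le_of_not_ge hab)
  have habs : |a - b| = b - a := by rw [abs_sub_comm]; exact abs_of_nonneg (by linarith)
  rw [habs]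
  have hsub := eta_subadd ha0 (by linarith : (0:ℝ) ≤ b - a) (by linarith : a + (b-a) ≤ 1)
  have hdrop := eta_drop ha0 (by linarith : (0:ℝ) ≤ b - a) (by linarith : a + (b-a) ≤ 1)
  rw [(by ring : a + (b - a) = b)] at hsub hdrop
  have he := eta_nonneg (by linarith : (0:ℝ) ≤ b - a) (by linarith)
  have hd : 0 ≤ (b - a) / Real.log 2 := div_nonneg (by linarith) (le_of_lt log2_pos)
  rw [abs_le]; constructor <;> [skip; skip] <;> nlinarith

-- (c) monotonicity of eta on [0, 1/4]
lemma eta_mono_quarter {x y : ℝ} (hx : 0 ≤ x) (hxy : x ≤ y) (hy : y ≤ 1/4) :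
    eta x ≤ eta y := by
  have hmono : MonotoneOn (fun x : ℝ => -(x * Real.log x)) (Set.Icc 0 (1/4)) := by
    apply monotoneOn_of_deriv_nonneg (convex_Icc 0 (1/4))
    · exact (Real.continuous_mul_log.neg).continuousOn
    · intro z hz
      rw [interior_Icc] at hz
      exact ((Real.hasDerivAt_mul_log (ne_of_gt hz.1)).neg).differentiableAt.differentiableWithinAt
    · intro z hz
      rw [interior_Icc] at hz
      rw [show deriv (fun x : ℝ => -(x * Real.log x)) z = -(Real.log z + 1) from
        ((Real.hasDerivAt_mul_log (ne_of_gt hz.1)).neg).deriv]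
      have : Real.log z ≤ Real.log (1/4) := Real.log_le_log hz.1 (le_of_lt hz.2)
      have h4 : Real.log (1/4) = -(2 * Real.log 2) := by
        rw [show (1/4 : ℝ) = 2⁻¹ ^ 2 by norm_num, Real.log_pow, Real.log_inv]; push_cast; ring
      have := Real.log_two_gt_d9
      nlinarith
  have := hmono (Set.mem_Icc.mpr ⟨hx, by linarith⟩) (Set.mem_Icc.mpr ⟨by linarith, hy⟩) hxy
  simp only at this
  unfold eta
  rw [Real.logb, Real.logb]
  calc -(x * (Real.log x / Real.log 2)) = (-(x * Real.log x)) / Real.log 2 := by ring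
    _ ≤ (-(y * Real.log y)) / Real.log 2 := by gcongr
    _ = -(y * (Real.log y / Real.log 2)) := by ring

lemma H2_nonneg {ε : ℝ} (h0 : 0 ≤ ε) (h1 : ε ≤ 1) : 0 ≤ H2 ε := by
  have h1' := eta_nonneg h0 h1
  have h2' := eta_nonneg (by linarith : (0:ℝ) ≤ 1 - ε) (by linarith)
  unfold H2; unfold eta at h1' h2'; nlinarith

lemma eta_le_H2 {ε : ℝ} (h0 : 0 ≤ ε) (h1 : ε ≤ 1) : eta ε ≤ H2 ε := by
  have h2' := eta_nonneg (by linarith : (0:ℝ) ≤ 1 - ε) (by linarith)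
  unfold H2; unfold eta at *; nlinarith

-- (d) ε / log 2 ≤ H2 ε for 0 < ε ≤ 1/4
lemma linear_le_H2 {ε : ℝ} (h0 : 0 < ε) (h1 : ε ≤ 1/4) : ε / Real.log 2 ≤ H2 ε := by
  have h2' := eta_nonneg (by linarith : (0:ℝ) ≤ 1 - ε) (by linarith)
  have hlog : Real.log ε ≤ -(2 * Real.log 2) := by
    have : Real.log ε ≤ Real.log (1/4) := Real.log_le_log h0 h1
    have h4 : Real.log (1/4) = -(2 * Real.log 2) := by
      rw [show (1/4 : ℝ) = 2⁻¹ ^ 2 by norm_num, Real.log_pow, Real.log_inv]; push_cast; ring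
    linarith
  have hl2 := log2_pos
  have hl2' := Real.log_two_gt_d9
  have heta : ε / Real.log 2 ≤ eta ε := by
    unfold eta; rw [Real.logb]
    have he : -(ε * (Real.log ε / Real.log 2)) = (ε * (-Real.log ε)) / Real.log 2 := by ring
    rw [he]
    gcongr
    nlinarith
  have := eta_le_H2 (le_of_lt h0) (by linarith)
  unfold H2 at *; unfold eta at *; linarith
lemma logb2_le_sub_one {x : ℝ} (hx : 0 < x) : Real.logb 2 x ≤ (x - 1) / Real.log 2 := by
  rw [Real.logb]
  have h2 := Real.log_pos one_lt_two
  have := Real.log_le_sub_one_of_pos hx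
  gcongr

-- Jensen (b)
lemma sum_eta_le {Y : Type*} [Fintype Y] [Nonempty Y] (d : Y → ℝ) (hd : ∀ y, 0 ≤ d y) :
    ∑ y, eta (d y) ≤ (∑ y, d y) * Real.logb 2 (Fintype.card Y) + eta (∑ y, d y) := by
  set δ := ∑ y, d y with hδ
  have hδ0 : 0 ≤ δ := Finset.sum_nonneg fun y _ => hd y
  rcases eq_or_lt_of_le hδ0 with h | h
  · have hall : ∀ y ∈ Finset.univ, d y = 0 :=
      (Finset.sum_eq_zero_iff_of_nonneg (fun y _ => hd y)).1 h.symm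
    have : ∑ y, eta (d y) = 0 := Finset.sum_eq_zero fun y hy => by rw [hall y hy]; simp [eta]
    rw [this, ← h]; simp [eta]
  · have hcard : (0:ℝ) < Fintype.card Y := by
      have := Fintype.card_pos (α := Y); positivity
    have key : ∀ y, eta (d y) ≤ d y * Real.logb 2 ((Fintype.card Y : ℝ) / δ) +
        (δ / Fintype.card Y - d y) / Real.log 2 := by
      intro y
      rcases eq_or_lt_of_le (hd y) with h0 | h0
      · rw [← h0]
        simp only [eta, zero_mul, neg_zero, zero_mul, sub_zero]
        have h2 : (0:ℝ) < Real.log 2 := Real.log_pos one_lt_two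
        positivity
      · have harg : (0:ℝ) < δ / (d y * Fintype.card Y) := by positivity
        have hlog := logb2_le_sub_one harg
        have heq : eta (d y) - d y * Real.logb 2 ((Fintype.card Y : ℝ) / δ) =
            d y * Real.logb 2 (δ / (d y * Fintype.card Y)) := by
          unfold eta
          rw [Real.logb_div (by positivity) (by positivity),
            Real.logb_div (by positivity) (by positivity),
            Real.logb_mul (by positivity) (by positivity)]
          ring
        have : d y * Real.logb 2 (δ / (d y * Fintype.card Y)) ≤
            d y * ((δ / (d y * Fintype.card Y) - 1) / Real.log 2) :=
          mul_le_mul_of_nonneg_left hlog (le_of_lt h0)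
        have heq2 : d y * ((δ / (d y * Fintype.card Y) - 1) / Real.log 2) =
            (δ / Fintype.card Y - d y) / Real.log 2 := by
          field_simp
        linarith
    calc ∑ y, eta (d y) ≤ ∑ y, (d y * Real.logb 2 ((Fintype.card Y : ℝ) / δ) +
          (δ / Fintype.card Y - d y) / Real.log 2) := Finset.sum_le_sum fun y _ => key y
      _ = δ * Real.logb 2 ((Fintype.card Y : ℝ) / δ) +
          (∑ y, (δ / Fintype.card Y - d y)) / Real.log 2 := by
        rw [Finset.sum_add_distrib, ← Finset.sum_mul, ← Finset.sum_div]
      _ = δ * Real.logb 2 ((Fintype.card Y : ℝ) / δ) := by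
        have : ∑ y, (δ / Fintype.card Y - d y) = 0 := by
          rw [Finset.sum_sub_distrib, Finset.sum_const, ← hδ]
          simp [Finset.card_univ]
          field_simp
          ring
        rw [this]; simp
      _ = δ * Real.logb 2 (Fintype.card Y) + eta δ := by
        rw [Real.logb_div (by positivity) (by positivity)]
        unfold eta; ring

-- Lemma A: Fannes-type continuity
lemma fannes {Y : Type*} [Fintype Y] {p p' : Y → ℝ} (hp : ∀ y, 0 ≤ p y) (hp' : ∀ y, 0 ≤ p' y)
    (hp1 : ∑ y, p y = 1) (hp1' : ∑ y, p' y = 1)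
    {ε : ℝ} (hε0 : 0 < ε) (hε : ε ≤ 1/4) (hd : ∑ y, |p y - p' y| ≤ ε) :
    |∑ y, eta (p y) - ∑ y, eta (p' y)| ≤ ε * Real.logb 2 (Fintype.card Y) + 2 * H2 ε := by
  have hNe : Nonempty Y := by
    by_contra h
    rw [not_nonempty_iff] at h
    rw [Finset.univ_eq_empty] at hp1
    simp at hp1
  have hle1 : ∀ (q : Y → ℝ), (∀ y, 0 ≤ q y) → (∑ y, q y = 1) → ∀ y, q y ≤ 1 := by
    intro q hq hq1 y
    calc q y ≤ ∑ y', q y' := Finset.single_le_sum (fun i _ => hq i) (Finset.mem_univ y)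
      _ = 1 := hq1
  set δ := ∑ y, |p y - p' y| with hδdef
  have hδ0 : 0 ≤ δ := Finset.sum_nonneg fun y _ => abs_nonneg _
  have step1 : |∑ y, eta (p y) - ∑ y, eta (p' y)| ≤ ∑ y, |eta (p y) - eta (p' y)| := by
    rw [← Finset.sum_sub_distrib]
    exact Finset.abs_sum_le_sum_abs _ _
  have step2 : ∑ y, |eta (p y) - eta (p' y)| ≤
      ∑ y, (eta |p y - p' y| + |p y - p' y| / Real.log 2) :=
    Finset.sum_le_sum fun y _ => eta_diff_le (hp y) (hle1 p hp hp1 y) (hp' y) (hle1 p' hp' hp1' y)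
  have step3 : ∑ y, (eta |p y - p' y| + |p y - p' y| / Real.log 2) ≤
      δ * Real.logb 2 (Fintype.card Y) + eta δ + δ / Real.log 2 := by
    rw [Finset.sum_add_distrib, ← Finset.sum_div]
    have := sum_eta_le (fun y => |p y - p' y|) (fun y => abs_nonneg _)
    linarith
  have hcard : (1:ℝ) ≤ Fintype.card Y := by exact_mod_cast Fintype.card_pos
  have hlogY : 0 ≤ Real.logb 2 (Fintype.card Y) := Real.logb_nonneg one_lt_two hcard
  have b1 : δ * Real.logb 2 (Fintype.card Y) ≤ ε * Real.logb 2 (Fintype.card Y) :=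
    mul_le_mul_of_nonneg_right hd hlogY
  have b2 : eta δ ≤ H2 ε :=
    le_trans (eta_mono_quarter hδ0 hd (by linarith)) (eta_le_H2 (le_of_lt hε0) (by linarith))
  have b3 : δ / Real.log 2 ≤ H2 ε := by
    have h1 : δ / Real.log 2 ≤ ε / Real.log 2 := by
      have := log2_pos
      gcongr
    linarith [linear_le_H2 hε0 hε]
  linarith
-- Conditional Fannes
lemma condFannes {C Y Z : Type*} [Fintype C] [Fintype Y] [Fintype Z]
    (ν : C → Z → ℝ) (hν : ∀ c z, 0 ≤ ν c z) (hν1 : ∑ c, ∑ z, ν c z = 1)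
    (K K' : Z → Y → ℝ) (hK : IsChannel K) (hK' : IsChannel K')
    {ε : ℝ} (hε0 : 0 < ε) (hε : ε ≤ 1/4) (hKd : ∀ z, ∑ y, |K z y - K' z y| ≤ ε) :
    |condEnt (fun p : C × Y => ∑ z, ν p.1 z * K z p.2) -
      condEnt (fun p : C × Y => ∑ z, ν p.1 z * K' z p.2)| ≤
    ε * Real.logb 2 (Fintype.card Y) + 2 * H2 ε := by
  set B := ε * Real.logb 2 (Fintype.card Y) + 2 * H2 ε with hB
  set m : C → ℝ := fun c => ∑ z, ν c z with hm
  have hm0 : ∀ c, 0 ≤ m c := fun c => Finset.sum_nonneg fun z _ => hν c z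
  -- generic facts about Q built from a channel
  have hQmarg : ∀ (L : Z → Y → ℝ), IsChannel L → ∀ c, (∑ y, ∑ z, ν c z * L z y) = m c := by
    intro L hL c
    rw [Finset.sum_comm]
    calc ∑ z, ∑ y, ν c z * L z y = ∑ z, ν c z * ∑ y, L z y := by
          apply Finset.sum_congr rfl; intro z _; rw [Finset.mul_sum]
      _ = m c := by apply Finset.sum_congr rfl; intro z _; rw [(hL z).2, mul_one]
  have key : ∀ c : C,
      |(-∑ y, (∑ z, ν c z * K z y) * Real.logb 2 ((∑ z, ν c z * K z y) / ∑ y', ∑ z, ν c z * K z y')) -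
       (-∑ y, (∑ z, ν c z * K' z y) * Real.logb 2 ((∑ z, ν c z * K' z y) / ∑ y', ∑ z, ν c z * K' z y'))|
      ≤ m c * B := by
    intro c
    rcases eq_or_lt_of_le (hm0 c) with h0 | h0
    · -- m c = 0 : all ν c z = 0
      have hz : ∀ z, ν c z = 0 := by
        intro z
        have := (Finset.sum_eq_zero_iff_of_nonneg (fun z _ => hν c z)).1 h0.symm
        exact this z (Finset.mem_univ z)
      simp only [hz, zero_mul, Finset.sum_const_zero, neg_zero, sub_zero, abs_zero]
      rw [← h0, zero_mul]
    · have hQm : ∀ y, (∑ z, ν c z * K z y) / ∑ y', ∑ z, ν c z * K z y' =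
          (∑ z, ν c z * K z y) / m c := by intro y; rw [hQmarg K hK c]
      have hQm' : ∀ y, (∑ z, ν c z * K' z y) / ∑ y', ∑ z, ν c z * K' z y' =
          (∑ z, ν c z * K' z y) / m c := by intro y; rw [hQmarg K' hK' c]
      set p : Y → ℝ := fun y => (∑ z, ν c z * K z y) / m c with hp
      set p' : Y → ℝ := fun y => (∑ z, ν c z * K' z y) / m c with hp'
      have hQ0 : ∀ y, 0 ≤ ∑ z, ν c z * K z y :=
        fun y => Finset.sum_nonneg fun z _ => mul_nonneg (hν c z) ((hK z).1 y)
      have hQ0' : ∀ y, 0 ≤ ∑ z, ν c z * K' z y :=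
        fun y => Finset.sum_nonneg fun z _ => mul_nonneg (hν c z) ((hK' z).1 y)
      have hpn : ∀ y, 0 ≤ p y := fun y => div_nonneg (hQ0 y) (hm0 c)
      have hpn' : ∀ y, 0 ≤ p' y := fun y => div_nonneg (hQ0' y) (hm0 c)
      have hp1 : ∑ y, p y = 1 := by
        rw [hp, ← Finset.sum_div, hQmarg K hK c, div_self (ne_of_gt h0)]
      have hp1' : ∑ y, p' y = 1 := by
        rw [hp', ← Finset.sum_div, hQmarg K' hK' c, div_self (ne_of_gt h0)]
      have hpd : ∑ y, |p y - p' y| ≤ ε := by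
        have hQd : ∑ y, |(∑ z, ν c z * K z y) - ∑ z, ν c z * K' z y| ≤ ε * m c := by
          calc ∑ y, |(∑ z, ν c z * K z y) - ∑ z, ν c z * K' z y|
              = ∑ y, |∑ z, ν c z * (K z y - K' z y)| := by
                apply Finset.sum_congr rfl; intro y _
                rw [← Finset.sum_sub_distrib]
                congr 1; apply Finset.sum_congr rfl; intro z _; ring
            _ ≤ ∑ y, ∑ z, |ν c z * (K z y - K' z y)| :=
                Finset.sum_le_sum fun y _ => Finset.abs_sum_le_sum_abs _ _
            _ = ∑ z, ν c z * ∑ y, |K z y - K' z y| := by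
                rw [Finset.sum_comm]
                apply Finset.sum_congr rfl; intro z _
                rw [Finset.mul_sum]
                apply Finset.sum_congr rfl; intro y _
                rw [abs_mul, abs_of_nonneg (hν c z)]
            _ ≤ ∑ z, ν c z * ε :=
                Finset.sum_le_sum fun z _ => mul_le_mul_of_nonneg_left (hKd z) (hν c z)
            _ = ε * m c := by rw [← Finset.sum_mul]; ring
        calc ∑ y, |p y - p' y|
            = (∑ y, |(∑ z, ν c z * K z y) - ∑ z, ν c z * K' z y|) / m c := by
              rw [Finset.sum_div]
              apply Finset.sum_congr rfl; intro y _
              rw [hp, hp', div_sub_div_same, abs_div, abs_of_pos h0]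
          _ ≤ (ε * m c) / m c := by gcongr
          _ = ε := by field_simp
      have hfan := fannes hpn hpn' hp1 hp1' hε0 hε hpd
      -- rewrite terms as m c * eta (p y)
      have hterm : ∀ (q : Y → ℝ), (∀ y, 0 ≤ q y) →
          (-∑ y, q y * Real.logb 2 (q y / m c)) = m c * ∑ y, eta (q y / m c) := by
        intro q hq
        rw [Finset.mul_sum, ← Finset.sum_neg_distrib]
        apply Finset.sum_congr rfl; intro y _
        unfold eta
        field_simp
      have e1 : (-∑ y, (∑ z, ν c z * K z y) * Real.logb 2 ((∑ z, ν c z * K z y) / ∑ y', ∑ z, ν c z * K z y'))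
          = m c * ∑ y, eta (p y) := by
        rw [show (∑ y, (∑ z, ν c z * K z y) * Real.logb 2 ((∑ z, ν c z * K z y) / ∑ y', ∑ z, ν c z * K z y'))
            = ∑ y, (∑ z, ν c z * K z y) * Real.logb 2 ((∑ z, ν c z * K z y) / m c) from
          Finset.sum_congr rfl fun y _ => by rw [hQm y]]
        exact hterm (fun y => ∑ z, ν c z * K z y) hQ0
      have e2 : (-∑ y, (∑ z, ν c z * K' z y) * Real.logb 2 ((∑ z, ν c z * K' z y) / ∑ y', ∑ z, ν c z * K' z y'))
          = m c * ∑ y, eta (p' y) := by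
        rw [show (∑ y, (∑ z, ν c z * K' z y) * Real.logb 2 ((∑ z, ν c z * K' z y) / ∑ y', ∑ z, ν c z * K' z y'))
            = ∑ y, (∑ z, ν c z * K' z y) * Real.logb 2 ((∑ z, ν c z * K' z y) / m c) from
          Finset.sum_congr rfl fun y _ => by rw [hQm' y]]
        exact hterm (fun y => ∑ z, ν c z * K' z y) hQ0'
      rw [e1, e2, ← mul_sub, abs_mul, abs_of_pos h0]
      exact mul_le_mul_of_nonneg_left hfan (le_of_lt h0)
  -- assemble
  have hce : ∀ (L : Z → Y → ℝ), condEnt (fun p : C × Y => ∑ z, ν p.1 z * L z p.2) =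
      ∑ c, (-∑ y, (∑ z, ν c z * L z y) * Real.logb 2 ((∑ z, ν c z * L z y) / ∑ y', ∑ z, ν c z * L z y')) := by
    intro L
    unfold condEnt
    rw [← Finset.sum_neg_distrib]
  rw [hce K, hce K']
  calc |∑ c, (-∑ y, (∑ z, ν c z * K z y) * Real.logb 2 ((∑ z, ν c z * K z y) / ∑ y', ∑ z, ν c z * K z y')) -
        ∑ c, (-∑ y, (∑ z, ν c z * K' z y) * Real.logb 2 ((∑ z, ν c z * K' z y) / ∑ y', ∑ z, ν c z * K' z y'))|
      ≤ ∑ c, |(-∑ y, (∑ z, ν c z * K z y) * Real.logb 2 ((∑ z, ν c z * K z y) / ∑ y', ∑ z, ν c z * K z y')) -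
        (-∑ y, (∑ z, ν c z * K' z y) * Real.logb 2 ((∑ z, ν c z * K' z y) / ∑ y', ∑ z, ν c z * K' z y'))| := by
        rw [← Finset.sum_sub_distrib]; exact Finset.abs_sum_le_sum_abs _ _
    _ ≤ ∑ c, m c * B := Finset.sum_le_sum fun c _ => key c
    _ = B := by rw [← Finset.sum_mul, hm]; rw [hν1]; ring
-- Chain rule identity: I(U;(Y,V)) = I(U;V) + H(Y|V) - H(Y|(U,V))
lemma chainRule {U V Y : Type*} [Fintype U] [Fintype V] [Fintype Y]
    (P : U × (Y × V) → ℝ) (hP : ∀ p, 0 ≤ P p) :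
    mutInf P = mutInf (fun q : U × V => ∑ y, P (q.1, (y, q.2)))
      + condEnt (fun q : V × Y => ∑ u, P (u, (q.2, q.1)))
      - condEnt (fun q : (U × V) × Y => P (q.1.1, (q.2, q.1.2))) := by
  have e1 : mutInf P = ∑ u : U, ∑ y : Y, ∑ v : V,
      P (u,(y,v)) * Real.logb 2 (P (u,(y,v)) /
        ((∑ b' : Y × V, P (u, b')) * ∑ u' : U, P (u',(y,v)))) := by
    unfold mutInf
    exact Finset.sum_congr rfl fun u _ => Fintype.sum_prod_type _
  have e2 : mutInf (fun q : U × V => ∑ y, P (q.1, (y, q.2))) = ∑ u : U, ∑ y : Y, ∑ v : V,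
      P (u,(y,v)) * Real.logb 2 ((∑ y', P (u,(y',v))) /
        ((∑ v' : V, ∑ y', P (u,(y',v'))) * (∑ u' : U, ∑ y', P (u',(y',v))))) := by
    unfold mutInf
    apply Finset.sum_congr rfl; intro u _
    calc (∑ v : V, (∑ y, P (u,(y,v))) * Real.logb 2 ((∑ y, P (u,(y,v))) /
            ((∑ v' : V, ∑ y, P (u,(y,v'))) * ∑ u' : U, ∑ y, P (u',(y,v)))))
        = ∑ v : V, ∑ y : Y, P (u,(y,v)) * Real.logb 2 ((∑ y', P (u,(y',v))) /
            ((∑ v' : V, ∑ y', P (u,(y',v'))) * (∑ u' : U, ∑ y', P (u',(y',v))))) :=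
          Finset.sum_congr rfl fun v _ => Finset.sum_mul _ _ _
      _ = ∑ y : Y, ∑ v : V, P (u,(y,v)) * Real.logb 2 ((∑ y', P (u,(y',v))) /
            ((∑ v' : V, ∑ y', P (u,(y',v'))) * (∑ u' : U, ∑ y', P (u',(y',v))))) :=
          Finset.sum_comm
  have e3 : condEnt (fun q : V × Y => ∑ u, P (u, (q.2, q.1))) = -∑ u : U, ∑ y : Y, ∑ v : V,
      P (u,(y,v)) * Real.logb 2 ((∑ u' : U, P (u',(y,v))) /
        (∑ y' : Y, ∑ u' : U, P (u',(y',v)))) := by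
    unfold condEnt
    congr 1
    calc (∑ v : V, ∑ y : Y, (∑ u, P (u,(y,v))) * Real.logb 2 ((∑ u, P (u,(y,v))) /
            ∑ y' : Y, ∑ u, P (u,(y',v))))
        = ∑ v : V, ∑ y : Y, ∑ u : U, P (u,(y,v)) * Real.logb 2 ((∑ u' : U, P (u',(y,v))) /
            (∑ y' : Y, ∑ u' : U, P (u',(y',v)))) :=
          Finset.sum_congr rfl fun v _ => Finset.sum_congr rfl fun y _ => Finset.sum_mul _ _ _
      _ = ∑ v : V, ∑ u : U, ∑ y : Y, P (u,(y,v)) * Real.logb 2 ((∑ u' : U, P (u',(y,v))) /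
            (∑ y' : Y, ∑ u' : U, P (u',(y',v)))) :=
          Finset.sum_congr rfl fun v _ => Finset.sum_comm
      _ = ∑ u : U, ∑ v : V, ∑ y : Y, P (u,(y,v)) * Real.logb 2 ((∑ u' : U, P (u',(y,v))) /
            (∑ y' : Y, ∑ u' : U, P (u',(y',v)))) := Finset.sum_comm
      _ = ∑ u : U, ∑ y : Y, ∑ v : V, P (u,(y,v)) * Real.logb 2 ((∑ u' : U, P (u',(y,v))) /
            (∑ y' : Y, ∑ u' : U, P (u',(y',v)))) :=
          Finset.sum_congr rfl fun u _ => Finset.sum_comm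
  have e4 : condEnt (fun q : (U × V) × Y => P (q.1.1, (q.2, q.1.2))) = -∑ u : U, ∑ y : Y, ∑ v : V,
      P (u,(y,v)) * Real.logb 2 (P (u,(y,v)) / (∑ y' : Y, P (u,(y',v)))) := by
    unfold condEnt
    congr 1
    calc (∑ q : U × V, ∑ y : Y, P (q.1,(y,q.2)) * Real.logb 2 (P (q.1,(y,q.2)) /
            ∑ y' : Y, P (q.1,(y',q.2))))
        = ∑ u : U, ∑ v : V, ∑ y : Y, P (u,(y,v)) * Real.logb 2 (P (u,(y,v)) /
            ∑ y' : Y, P (u,(y',v))) := Fintype.sum_prod_type _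
      _ = ∑ u : U, ∑ y : Y, ∑ v : V, P (u,(y,v)) * Real.logb 2 (P (u,(y,v)) /
            ∑ y' : Y, P (u,(y',v))) :=
          Finset.sum_congr rfl fun u _ => Finset.sum_comm
  rw [e1, e2, e3, e4]
  have key : ∀ u y v,
      P (u,(y,v)) * Real.logb 2 (P (u,(y,v)) /
        ((∑ b' : Y × V, P (u, b')) * ∑ u' : U, P (u',(y,v))))
      = P (u,(y,v)) * Real.logb 2 ((∑ y', P (u,(y',v))) /
          ((∑ v' : V, ∑ y', P (u,(y',v'))) * (∑ u' : U, ∑ y', P (u',(y',v)))))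
        - P (u,(y,v)) * Real.logb 2 ((∑ u' : U, P (u',(y,v))) /
          (∑ y' : Y, ∑ u' : U, P (u',(y',v))))
        + P (u,(y,v)) * Real.logb 2 (P (u,(y,v)) / (∑ y' : Y, P (u,(y',v)))) := by
    intro u y v
    by_cases h : P (u,(y,v)) = 0
    · simp [h]
    have hPpos : 0 < P (u,(y,v)) := lt_of_le_of_ne (hP _) (Ne.symm h)
    have hMpos : 0 < ∑ y', P (u,(y',v)) :=
      lt_of_lt_of_le hPpos (Finset.single_le_sum (fun i _ => hP (u,(i,v))) (Finset.mem_univ y))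
    have hBpos : 0 < ∑ u' : U, P (u',(y,v)) :=
      lt_of_lt_of_le hPpos (Finset.single_le_sum (fun i _ => hP (i,(y,v))) (Finset.mem_univ u))
    have hApos : 0 < ∑ b' : Y × V, P (u, b') :=
      lt_of_lt_of_le hPpos (Finset.single_le_sum (fun i _ => hP (u,i)) (Finset.mem_univ (y,v)))
    have hMBpos : 0 < ∑ y' : Y, ∑ u' : U, P (u',(y',v)) :=
      lt_of_lt_of_le hBpos (Finset.single_le_sum
        (fun i _ => Finset.sum_nonneg fun u' _ => hP (u',(i,v))) (Finset.mem_univ y))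
    have hA2eq : (∑ v' : V, ∑ y', P (u,(y',v'))) = ∑ b' : Y × V, P (u, b') := by
      rw [Fintype.sum_prod_type]
      exact Finset.sum_comm
    have hMB2eq : (∑ u' : U, ∑ y', P (u',(y',v))) = ∑ y' : Y, ∑ u' : U, P (u',(y',v)) :=
      Finset.sum_comm
    rw [hA2eq, hMB2eq]
    rw [Real.logb_div (ne_of_gt hPpos) (ne_of_gt (mul_pos hApos hBpos)),
      Real.logb_mul (ne_of_gt hApos) (ne_of_gt hBpos),
      Real.logb_div (ne_of_gt hMpos) (ne_of_gt (mul_pos hApos hMBpos)),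
      Real.logb_mul (ne_of_gt hApos) (ne_of_gt hMBpos),
      Real.logb_div (ne_of_gt hBpos) (ne_of_gt hMBpos),
      Real.logb_div (ne_of_gt hPpos) (ne_of_gt hMpos)]
    ring
  calc (∑ u : U, ∑ y : Y, ∑ v : V,
      P (u,(y,v)) * Real.logb 2 (P (u,(y,v)) /
        ((∑ b' : Y × V, P (u, b')) * ∑ u' : U, P (u',(y,v)))))
      = ∑ u : U, ∑ y : Y, ∑ v : V,
        (P (u,(y,v)) * Real.logb 2 ((∑ y', P (u,(y',v))) /
          ((∑ v' : V, ∑ y', P (u,(y',v'))) * (∑ u' : U, ∑ y', P (u',(y',v)))))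
        - P (u,(y,v)) * Real.logb 2 ((∑ u' : U, P (u',(y,v))) /
          (∑ y' : Y, ∑ u' : U, P (u',(y',v))))
        + P (u,(y,v)) * Real.logb 2 (P (u,(y,v)) / (∑ y' : Y, P (u,(y',v))))) :=
        Finset.sum_congr rfl fun u _ => Finset.sum_congr rfl fun y _ =>
          Finset.sum_congr rfl fun v _ => key u y v
    _ = (∑ u : U, ∑ y : Y, ∑ v : V,
        P (u,(y,v)) * Real.logb 2 ((∑ y', P (u,(y',v))) /
          ((∑ v' : V, ∑ y', P (u,(y',v'))) * (∑ u' : U, ∑ y', P (u',(y',v))))))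
        + (-∑ u : U, ∑ y : Y, ∑ v : V,
          P (u,(y,v)) * Real.logb 2 ((∑ u' : U, P (u',(y,v))) /
            (∑ y' : Y, ∑ u' : U, P (u',(y',v)))))
        - (-∑ u : U, ∑ y : Y, ∑ v : V,
          P (u,(y,v)) * Real.logb 2 (P (u,(y,v)) / (∑ y' : Y, P (u,(y',v))))) := by
        simp only [Finset.sum_add_distrib, Finset.sum_sub_distrib]
        ring
-- Abstract one-coordinate step bound
lemma stepBound {U V Y Z : Type*} [Fintype U] [Fintype V] [Fintype Y] [Fintype Z]
    (μ : U → V → Z → ℝ) (hμ : ∀ u v z, 0 ≤ μ u v z) (hμ1 : ∑ u, ∑ v, ∑ z, μ u v z = 1)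
    (K K' : Z → Y → ℝ) (hK : IsChannel K) (hK' : IsChannel K')
    {ε : ℝ} (hε0 : 0 < ε) (hε : ε ≤ 1/4) (hKd : ∀ z, ∑ y, |K z y - K' z y| ≤ ε) :
    |mutInf (fun p : U × (Y × V) => ∑ z, μ p.1 p.2.2 z * K z p.2.1) -
      mutInf (fun p : U × (Y × V) => ∑ z, μ p.1 p.2.2 z * K' z p.2.1)| ≤
    2 * (ε * Real.logb 2 (Fintype.card Y) + 2 * H2 ε) := by
  have hPn : ∀ (L : Z → Y → ℝ), IsChannel L → ∀ p : U × (Y × V),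
      0 ≤ ∑ z, μ p.1 p.2.2 z * L z p.2.1 :=
    fun L hL p => Finset.sum_nonneg fun z _ => mul_nonneg (hμ _ _ _) ((hL z).1 _)
  have hcr := chainRule (fun p : U × (Y × V) => ∑ z, μ p.1 p.2.2 z * K z p.2.1) (hPn K hK)
  have hcr' := chainRule (fun p : U × (Y × V) => ∑ z, μ p.1 p.2.2 z * K' z p.2.1) (hPn K' hK')
  -- the U×V marginal parts coincide
  have eqM : ∀ (L : Z → Y → ℝ), IsChannel L →
      (fun q : U × V => ∑ y, ∑ z, μ q.1 q.2 z * L z y) = fun q : U × V => ∑ z, μ q.1 q.2 z := by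
    intro L hL
    funext q
    rw [Finset.sum_comm]
    apply Finset.sum_congr rfl; intro z _
    rw [← Finset.mul_sum, (hL z).2, mul_one]
  -- conditional entropy parts in condFannes shape
  have eqQ1 : ∀ (L : Z → Y → ℝ),
      (fun q : V × Y => ∑ u, ∑ z, μ u q.1 z * L z q.2) =
      (fun q : V × Y => ∑ z, (∑ u, μ u q.1 z) * L z q.2) := by
    intro L; funext q
    rw [Finset.sum_comm]
    exact Finset.sum_congr rfl fun z _ => (Finset.sum_mul _ _ _).symm
  have hcf1 := condFannes (fun v z => ∑ u, μ u v z)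
    (fun v z => Finset.sum_nonneg fun u _ => hμ u v z)
    (by calc ∑ v : V, ∑ z : Z, ∑ u : U, μ u v z
            = ∑ v : V, ∑ u : U, ∑ z : Z, μ u v z :=
              Finset.sum_congr rfl fun v _ => Finset.sum_comm
          _ = ∑ u : U, ∑ v : V, ∑ z : Z, μ u v z := Finset.sum_comm
          _ = 1 := hμ1)
    K K' hK hK' hε0 hε hKd
  have hcf2 := condFannes (fun (c : U × V) z => μ c.1 c.2 z)
    (fun c z => hμ c.1 c.2 z)
    (by rw [Fintype.sum_prod_type]; exact hμ1)
    K K' hK hK' hε0 hε hKd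
  rw [hcr, hcr', eqM K hK, eqM K' hK']
  have hcf1' : |condEnt (fun q : V × Y => ∑ u, ∑ z, μ u q.1 z * K z q.2)
      - condEnt (fun q : V × Y => ∑ u, ∑ z, μ u q.1 z * K' z q.2)| ≤
      ε * Real.logb 2 (Fintype.card Y) + 2 * H2 ε := by
    rw [eqQ1 K, eqQ1 K']; exact hcf1
  have hcf2' : |condEnt (fun q : (U × V) × Y => ∑ z, μ q.1.1 q.1.2 z * K z q.2)
      - condEnt (fun q : (U × V) × Y => ∑ z, μ q.1.1 q.1.2 z * K' z q.2)| ≤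
      ε * Real.logb 2 (Fintype.card Y) + 2 * H2 ε := hcf2
  show |(mutInf (fun q : U × V => ∑ z, μ q.1 q.2 z)
      + condEnt (fun q : V × Y => ∑ u, ∑ z, μ u q.1 z * K z q.2)
      - condEnt (fun q : (U × V) × Y => ∑ z, μ q.1.1 q.1.2 z * K z q.2))
    - (mutInf (fun q : U × V => ∑ z, μ q.1 q.2 z)
      + condEnt (fun q : V × Y => ∑ u, ∑ z, μ u q.1 z * K' z q.2)
      - condEnt (fun q : (U × V) × Y => ∑ z, μ q.1.1 q.1.2 z * K' z q.2))| ≤ _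
  have heq : (mutInf (fun q : U × V => ∑ z, μ q.1 q.2 z)
      + condEnt (fun q : V × Y => ∑ u, ∑ z, μ u q.1 z * K z q.2)
      - condEnt (fun q : (U × V) × Y => ∑ z, μ q.1.1 q.1.2 z * K z q.2))
    - (mutInf (fun q : U × V => ∑ z, μ q.1 q.2 z)
      + condEnt (fun q : V × Y => ∑ u, ∑ z, μ u q.1 z * K' z q.2)
      - condEnt (fun q : (U × V) × Y => ∑ z, μ q.1.1 q.1.2 z * K' z q.2))
    = (condEnt (fun q : V × Y => ∑ u, ∑ z, μ u q.1 z * K z q.2)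
      - condEnt (fun q : V × Y => ∑ u, ∑ z, μ u q.1 z * K' z q.2))
    - (condEnt (fun q : (U × V) × Y => ∑ z, μ q.1.1 q.1.2 z * K z q.2)
      - condEnt (fun q : (U × V) × Y => ∑ z, μ q.1.1 q.1.2 z * K' z q.2)) := by ring
  rw [heq]
  calc |_ - _| ≤ |condEnt (fun q : V × Y => ∑ u, ∑ z, μ u q.1 z * K z q.2)
      - condEnt (fun q : V × Y => ∑ u, ∑ z, μ u q.1 z * K' z q.2)|
      + |condEnt (fun q : (U × V) × Y => ∑ z, μ q.1.1 q.1.2 z * K z q.2)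
      - condEnt (fun q : (U × V) × Y => ∑ z, μ q.1.1 q.1.2 z * K' z q.2)| := abs_sub _ _
    _ ≤ 2 * (ε * Real.logb 2 (Fintype.card Y) + 2 * H2 ε) := by linarith
noncomputable def jointOutV {X Y U : Type*} [Fintype X] [Fintype U] (n : ℕ)
    (Wv : Fin n → X → Y → ℝ) (E : U → (Fin n → X) → ℝ) : U × (Fin n → Y) → ℝ :=
  fun p => ∑ xn : Fin n → X,
    (∏ i : Fin n, Wv i (xn i) (p.2 i)) * E p.1 xn * ((Fintype.card U : ℝ))⁻¹

lemma mutInf_equiv {U B B' : Type*} [Fintype U] [Fintype B] [Fintype B']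
    (P : U × B → ℝ) (e : B' ≃ B) :
    mutInf (fun p : U × B' => P (p.1, e p.2)) = mutInf P := by
  unfold mutInf
  apply Finset.sum_congr rfl; intro u _
  have hmarg : (∑ y' : B', P (u, e y')) = ∑ y' : B, P (u, y') :=
    Equiv.sum_comp e (fun b => P (u, b))
  calc ∑ y : B', P (u, e y) * Real.logb 2 (P (u, e y) /
          ((∑ y' : B', P (u, e y')) * ∑ u', P (u', e y)))
      = ∑ y : B', P (u, e y) * Real.logb 2 (P (u, e y) /
          ((∑ y' : B, P (u, y')) * ∑ u', P (u', e y))) := by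
        apply Finset.sum_congr rfl; intro y _; rw [hmarg]
    _ = ∑ y : B, P (u, y) * Real.logb 2 (P (u, y) /
          ((∑ y' : B, P (u, y')) * ∑ u', P (u', y))) :=
        Equiv.sum_comp e (fun y => P (u, y) * Real.logb 2 (P (u, y) /
          ((∑ y' : B, P (u, y')) * ∑ u', P (u', y))))

lemma jointStep {X Y U : Type*} [Fintype X] [Fintype Y] [Fintype U] [Nonempty U] {n : ℕ}
    (Wa Wb : Fin n → X → Y → ℝ) (hWa : ∀ i, IsChannel (Wa i)) (hWb : ∀ i, IsChannel (Wb i))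
    (E : U → (Fin n → X) → ℝ)
    (hE : ∀ u, (∀ xn, 0 ≤ E u xn) ∧ ∑ xn : Fin n → X, E u xn = 1)
    (k : Fin n) (hagree : ∀ i, i ≠ k → Wa i = Wb i)
    {ε : ℝ} (hε0 : 0 < ε) (hε : ε ≤ 1/4) (hd : ∀ x, ∑ y, |Wa k x y - Wb k x y| ≤ ε) :
    |mutInf (jointOutV n Wa E) - mutInf (jointOutV n Wb E)| ≤
      2 * (ε * Real.logb 2 (Fintype.card Y) + 2 * H2 ε) := by
  classical
  set V := ({j : Fin n // j ≠ k} → Y) with hV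
  set e := Equiv.piSplitAt k (fun _ : Fin n => Y) with he
  set c : ℝ := ((Fintype.card U : ℝ))⁻¹ with hc
  set μ : U → V → X → ℝ := fun u v z => ∑ xn : Fin n → X,
    (if xn k = z then (∏ j : {j : Fin n // j ≠ k}, Wa j (xn j) (v j)) * E u xn * c else 0)
    with hμdef
  -- the transported joint equals the μ-shape
  have ident : ∀ (Wc : Fin n → X → Y → ℝ), (∀ j, j ≠ k → Wc j = Wa j) →
      (fun p : U × (Y × V) => jointOutV n Wc E (p.1, e.symm p.2)) =
      (fun p : U × (Y × V) => ∑ z, μ p.1 p.2.2 z * Wc k z p.2.1) := by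
    intro Wc hWc
    funext p
    obtain ⟨u, y, v⟩ := p
    show (∑ xn : Fin n → X, (∏ i : Fin n, Wc i (xn i) (e.symm (y, v) i)) * E u xn * c)
      = ∑ z, μ u v z * Wc k z y
    have hsplit : ∀ xn : Fin n → X,
        (∏ i : Fin n, Wc i (xn i) (e.symm (y, v) i)) =
        Wc k (xn k) y * ∏ j : {j : Fin n // j ≠ k}, Wa j (xn j) (v j) := by
      intro xn
      rw [← Finset.mul_prod_erase Finset.univ _ (Finset.mem_univ k)]
      congr 1
      · congr 1
        simp [he, Equiv.piSplitAt_symm_apply]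
      · rw [Finset.prod_subtype (p := fun j => j ≠ k) (Finset.univ.erase k)
          (fun j => by simp [Finset.mem_erase]) (fun j => Wc j (xn j) (e.symm (y, v) j))]
        apply Finset.prod_congr rfl
        intro j _
        rw [hWc j j.2]
        congr 1
        simp [he, Equiv.piSplitAt_symm_apply, j.2]
    have hrhs : ∑ z, μ u v z * Wc k z y = ∑ xn : Fin n → X,
        ((∏ j : {j : Fin n // j ≠ k}, Wa j (xn j) (v j)) * E u xn * c) * Wc k (xn k) y := by
      rw [hμdef]
      simp only [Finset.sum_mul]
      rw [Finset.sum_comm]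
      apply Finset.sum_congr rfl; intro xn _
      simp only [ite_mul, zero_mul]
      rw [Finset.sum_ite_eq Finset.univ (xn k) (fun z => (∏ j : {j : Fin n // j ≠ k},
          Wa j (xn j) (v j)) * E u xn * c * Wc k z y)]
      simp
    rw [hrhs]
    apply Finset.sum_congr rfl; intro xn _
    rw [hsplit xn]; ring
  -- μ is a probability distribution
  have hμn : ∀ u v z, 0 ≤ μ u v z := by
    intro u v z
    apply Finset.sum_nonneg; intro xn _
    split
    · exact mul_nonneg (mul_nonneg (Finset.prod_nonneg fun j _ => (hWa j (xn j)).1 _)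
        ((hE u).1 xn)) (by positivity)
    · exact le_refl 0
  have hμ1 : ∑ u, ∑ v, ∑ z, μ u v z = 1 := by
    have hcol : ∀ u v, ∑ z, μ u v z = ∑ xn : Fin n → X,
        (∏ j : {j : Fin n // j ≠ k}, Wa j (xn j) (v j)) * E u xn * c := by
      intro u v
      rw [hμdef]
      rw [Finset.sum_comm]
      apply Finset.sum_congr rfl; intro xn _
      rw [Finset.sum_ite_eq Finset.univ (xn k) (fun _ => (∏ j : {j : Fin n // j ≠ k},
        Wa j (xn j) (v j)) * E u xn * c)]
      simp
    calc ∑ u, ∑ v, ∑ z, μ u v z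
        = ∑ u, ∑ xn : Fin n → X, (∑ v : V, ∏ j : {j : Fin n // j ≠ k},
            Wa j (xn j) (v j)) * E u xn * c := by
          apply Finset.sum_congr rfl; intro u _
          rw [Finset.sum_congr rfl fun v (_ : v ∈ Finset.univ) => hcol u v, Finset.sum_comm]
          apply Finset.sum_congr rfl; intro xn _
          rw [Finset.sum_mul, Finset.sum_mul]
      _ = ∑ u, ∑ xn : Fin n → X, E u xn * c := by
          apply Finset.sum_congr rfl; intro u _
          apply Finset.sum_congr rfl; intro xn _
          have : (∑ v : V, ∏ j : {j : Fin n // j ≠ k}, Wa j (xn j) (v j)) = 1 := by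
            rw [← Fintype.piFinset_univ, ← Finset.prod_univ_sum]
            exact Finset.prod_eq_one fun j _ => (hWa j (xn j)).2
          rw [this, one_mul]
      _ = 1 := by
          have : ∀ u, ∑ xn : Fin n → X, E u xn * c = c := by
            intro u; rw [← Finset.sum_mul, (hE u).2, one_mul]
          rw [Finset.sum_congr rfl fun u _ => this u, Finset.sum_const, Finset.card_univ,
            nsmul_eq_mul, hc]
          field_simp
  have hsb := stepBound μ hμn hμ1 (Wa k) (Wb k) (hWa k) (hWb k) hε0 hε hd
  rw [← mutInf_equiv (jointOutV n Wa E) e.symm, ← mutInf_equiv (jointOutV n Wb E) e.symm]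
  rw [ident Wa (fun _ _ => rfl), ident Wb (fun j hj => (hagree j hj).symm)]
  exact hsb
-- mass and nonnegativity of jointOutV
lemma jointOutV_nonneg {X Y U : Type*} [Fintype X] [Fintype Y] [Fintype U] {n : ℕ}
    (Wv : Fin n → X → Y → ℝ) (hW : ∀ i, IsChannel (Wv i)) (E : U → (Fin n → X) → ℝ)
    (hE : ∀ u, (∀ xn, 0 ≤ E u xn) ∧ ∑ xn : Fin n → X, E u xn = 1) (p : U × (Fin n → Y)) :
    0 ≤ jointOutV n Wv E p := by
  apply Finset.sum_nonneg; intro xn _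
  have : (0:ℝ) ≤ ((Fintype.card U : ℝ))⁻¹ := by positivity
  exact mul_nonneg (mul_nonneg (Finset.prod_nonneg fun i _ => (hW i (xn i)).1 _)
    ((hE p.1).1 xn)) this

lemma jointOutV_mass {X Y U : Type*} [Fintype X] [Fintype Y] [Fintype U] [Nonempty U] {n : ℕ}
    (Wv : Fin n → X → Y → ℝ) (hW : ∀ i, IsChannel (Wv i)) (E : U → (Fin n → X) → ℝ)
    (hE : ∀ u, (∀ xn, 0 ≤ E u xn) ∧ ∑ xn : Fin n → X, E u xn = 1) :
    ∑ p : U × (Fin n → Y), jointOutV n Wv E p = 1 := by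
  rw [Fintype.sum_prod_type]
  unfold jointOutV
  calc ∑ u : U, ∑ b : Fin n → Y, ∑ xn : Fin n → X,
        (∏ i : Fin n, Wv i (xn i) (b i)) * E u xn * ((Fintype.card U : ℝ))⁻¹
      = ∑ u : U, ∑ xn : Fin n → X, (∑ b : Fin n → Y, ∏ i : Fin n, Wv i (xn i) (b i))
          * E u xn * ((Fintype.card U : ℝ))⁻¹ := by
        apply Finset.sum_congr rfl; intro u _
        rw [Finset.sum_comm]
        apply Finset.sum_congr rfl; intro xn _
        rw [Finset.sum_mul, Finset.sum_mul]
    _ = ∑ u : U, ∑ xn : Fin n → X, E u xn * ((Fintype.card U : ℝ))⁻¹ := by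
        apply Finset.sum_congr rfl; intro u _
        apply Finset.sum_congr rfl; intro xn _
        have : (∑ b : Fin n → Y, ∏ i : Fin n, Wv i (xn i) (b i)) = 1 := by
          rw [← Fintype.piFinset_univ, ← Finset.prod_univ_sum]
          exact Finset.prod_eq_one fun i _ => (hW i (xn i)).2
        rw [this, one_mul]
    _ = 1 := by
        have : ∀ u : U, ∑ xn : Fin n → X, E u xn * ((Fintype.card U : ℝ))⁻¹ =
            ((Fintype.card U : ℝ))⁻¹ := by
          intro u; rw [← Finset.sum_mul, (hE u).2, one_mul]
        rw [Finset.sum_congr rfl fun u _ => this u, Finset.sum_const, Finset.card_univ,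
          nsmul_eq_mul]
        have : (Fintype.card U : ℝ) ≠ 0 := by
          exact_mod_cast Fintype.card_ne_zero
        field_simp

-- 0 ≤ mutInf
lemma mutInf_nonneg {U B : Type*} [Fintype U] [Fintype B] (P : U × B → ℝ)
    (hP : ∀ p, 0 ≤ P p) (h1 : ∑ p : U × B, P p = 1) : 0 ≤ mutInf P := by
  have hA : ∑ u : U, ∑ b : B, P (u, b) = 1 := by rw [← Fintype.sum_prod_type]; exact h1
  have hB : ∑ b : B, ∑ u : U, P (u, b) = 1 := by rw [Finset.sum_comm]; exact hA
  have key : ∀ u b, (P (u, b) - (∑ b' : B, P (u, b')) * (∑ u' : U, P (u', b))) / Real.log 2 ≤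
      P (u, b) * Real.logb 2 (P (u, b) / ((∑ b' : B, P (u, b')) * ∑ u' : U, P (u', b))) := by
    intro u b
    set A := ∑ b' : B, P (u, b') with hAdef
    set Bm := ∑ u' : U, P (u', b) with hBdef
    have hA0 : 0 ≤ A := Finset.sum_nonneg fun b' _ => hP _
    have hB0 : 0 ≤ Bm := Finset.sum_nonneg fun u' _ => hP _
    by_cases h : P (u, b) = 0
    · rw [h]
      simp only [zero_mul, zero_sub]
      apply div_nonpos_of_nonpos_of_nonneg _ (le_of_lt log2_pos)
      simp [mul_nonneg hA0 hB0]
    · have hPpos : 0 < P (u, b) := lt_of_le_of_ne (hP _) (Ne.symm h)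
      have hApos : 0 < A :=
        lt_of_lt_of_le hPpos (Finset.single_le_sum (fun i _ => hP (u, i)) (Finset.mem_univ b))
      have hBpos : 0 < Bm :=
        lt_of_lt_of_le hPpos (Finset.single_le_sum (fun i _ => hP (i, b)) (Finset.mem_univ u))
      have hub := logb2_le_sub_one (show (0:ℝ) < A * Bm / P (u, b) by positivity)
      have hrev : Real.logb 2 (A * Bm / P (u, b)) = - Real.logb 2 (P (u, b) / (A * Bm)) := by
        rw [← Real.logb_inv]
        congr 1
        field_simp
      rw [hrev] at hub
      have := mul_le_mul_of_nonneg_left (neg_le_neg hub) (le_of_lt hPpos)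
      calc (P (u, b) - A * Bm) / Real.log 2
          = P (u, b) * (-((A * Bm / P (u, b) - 1) / Real.log 2)) := by
            field_simp
            ring
        _ ≤ P (u, b) * Real.logb 2 (P (u, b) / (A * Bm)) := by
            apply mul_le_mul_of_nonneg_left _ (le_of_lt hPpos)
            linarith
  have hsum : ∑ u : U, ∑ b : B,
      (P (u, b) - (∑ b' : B, P (u, b')) * (∑ u' : U, P (u', b))) / Real.log 2 = 0 := by
    have e1 : ∑ u : U, ∑ b : B, (P (u, b) - (∑ b' : B, P (u, b')) * (∑ u' : U, P (u', b)))
        = (∑ u : U, ∑ b : B, P (u, b)) -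
          (∑ u : U, (∑ b' : B, P (u, b')) * ∑ b : B, (∑ u' : U, P (u', b))) := by
      simp only [Finset.sum_sub_distrib]
      congr 1
      apply Finset.sum_congr rfl; intro u _
      rw [Finset.mul_sum]
    simp only [← Finset.sum_div]
    rw [e1, hA]
    have : (∑ u : U, (∑ b' : B, P (u, b')) * ∑ b : B, ∑ u' : U, P (u', b)) = 1 := by
      rw [hB]
      simp only [mul_one]
      exact hA
    rw [this]
    simp
  unfold mutInf
  calc (0:ℝ) = ∑ u : U, ∑ b : B,
      (P (u, b) - (∑ b' : B, P (u, b')) * (∑ u' : U, P (u', b))) / Real.log 2 := hsum.symm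
    _ ≤ _ := Finset.sum_le_sum fun u _ => Finset.sum_le_sum fun b _ => key u b
lemma mutInf_le_card {U B : Type*} [Fintype U] [Fintype B] (P : U × B → ℝ)
    (hP : ∀ p, 0 ≤ P p) (h1 : ∑ p : U × B, P p = 1) :
    mutInf P ≤ Real.logb 2 (Fintype.card B) := by
  have hA : ∑ u : U, ∑ b : B, P (u, b) = 1 := by rw [← Fintype.sum_prod_type]; exact h1
  have hB : ∑ b : B, ∑ u : U, P (u, b) = 1 := by rw [Finset.sum_comm]; exact hA
  have hBne : Nonempty B := by
    by_contra h
    rw [not_nonempty_iff] at h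
    rw [Finset.univ_eq_empty] at hB
    simp at hB
  have hN1 : (1:ℝ) ≤ Fintype.card B := by exact_mod_cast Fintype.card_pos
  -- Step 1: mutInf P ≤ - ∑ b, Bm b * logb 2 (Bm b)
  have step1 : mutInf P ≤ -∑ b : B, (∑ u : U, P (u, b)) * Real.logb 2 (∑ u : U, P (u, b)) := by
    have key : ∀ u b,
        P (u, b) * Real.logb 2 (P (u, b) / ((∑ b' : B, P (u, b')) * ∑ u' : U, P (u', b)))
          + P (u, b) * Real.logb 2 (∑ u' : U, P (u', b)) ≤ 0 := by
      intro u b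
      by_cases h : P (u, b) = 0
      · simp [h]
      have hPpos : 0 < P (u, b) := lt_of_le_of_ne (hP _) (Ne.symm h)
      have hApos : 0 < ∑ b' : B, P (u, b') :=
        lt_of_lt_of_le hPpos (Finset.single_le_sum (fun i _ => hP (u, i)) (Finset.mem_univ b))
      have hBpos : 0 < ∑ u' : U, P (u', b) :=
        lt_of_lt_of_le hPpos (Finset.single_le_sum (fun i _ => hP (i, b)) (Finset.mem_univ u))
      have hPA : P (u, b) ≤ ∑ b' : B, P (u, b') :=
        Finset.single_le_sum (fun i _ => hP (u, i)) (Finset.mem_univ b)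
      have heq : P (u, b) * Real.logb 2 (P (u, b) / ((∑ b' : B, P (u, b')) * ∑ u' : U, P (u', b)))
          + P (u, b) * Real.logb 2 (∑ u' : U, P (u', b))
          = P (u, b) * Real.logb 2 (P (u, b) / (∑ b' : B, P (u, b'))) := by
        rw [Real.logb_div (ne_of_gt hPpos) (ne_of_gt (mul_pos hApos hBpos)),
          Real.logb_mul (ne_of_gt hApos) (ne_of_gt hBpos),
          Real.logb_div (ne_of_gt hPpos) (ne_of_gt hApos)]
        ring
      rw [heq]
      apply mul_nonpos_of_nonneg_of_nonpos (le_of_lt hPpos)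
      apply Real.logb_nonpos one_lt_two (by positivity)
      rw [div_le_one hApos]
      exact hPA
    have expand : -∑ b : B, (∑ u : U, P (u, b)) * Real.logb 2 (∑ u : U, P (u, b))
        = -∑ u : U, ∑ b : B, P (u, b) * Real.logb 2 (∑ u' : U, P (u', b)) := by
      congr 1
      rw [Finset.sum_comm]
      apply Finset.sum_congr rfl; intro b _
      rw [Finset.sum_mul]
    rw [expand]
    unfold mutInf
    rw [← sub_nonpos]
    have : (∑ u : U, ∑ b : B,
        P (u, b) * Real.logb 2 (P (u, b) / ((∑ b' : B, P (u, b')) * ∑ u' : U, P (u', b))))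
        - (-∑ u : U, ∑ b : B, P (u, b) * Real.logb 2 (∑ u' : U, P (u', b)))
        = ∑ u : U, ∑ b : B,
          (P (u, b) * Real.logb 2 (P (u, b) / ((∑ b' : B, P (u, b')) * ∑ u' : U, P (u', b)))
            + P (u, b) * Real.logb 2 (∑ u' : U, P (u', b))) := by
      simp only [Finset.sum_add_distrib]
      ring
    rw [this]
    exact Finset.sum_nonpos fun u _ => Finset.sum_nonpos fun b _ => key u b
  -- Step 2: entropy of the B-marginal is at most logb card B
  have step2 : -∑ b : B, (∑ u : U, P (u, b)) * Real.logb 2 (∑ u : U, P (u, b)) ≤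
      Real.logb 2 (Fintype.card B) := by
    set N : ℝ := (Fintype.card B : ℝ) with hN
    have hNpos : (0:ℝ) < N := by linarith
    have key : ∀ b : B, (∑ u : U, P (u, b)) * Real.logb 2 (1 / ((∑ u : U, P (u, b)) * N)) ≤
        (1 / N - (∑ u : U, P (u, b))) / Real.log 2 := by
      intro b
      set t := ∑ u : U, P (u, b) with ht
      have ht0 : 0 ≤ t := Finset.sum_nonneg fun u _ => hP _
      rcases eq_or_lt_of_le ht0 with h | h
      · rw [← h]
        simp only [zero_mul, sub_zero]
        positivity
      · have := logb2_le_sub_one (show (0:ℝ) < 1 / (t * N) by positivity)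
        calc t * Real.logb 2 (1 / (t * N)) ≤ t * ((1 / (t * N) - 1) / Real.log 2) :=
              mul_le_mul_of_nonneg_left this (le_of_lt h)
          _ = (1 / N - t) / Real.log 2 := by field_simp
    have ident : ∀ b : B, (∑ u : U, P (u, b)) * Real.logb 2 (1 / ((∑ u : U, P (u, b)) * N))
        = -(∑ u : U, P (u, b)) * Real.logb 2 (∑ u : U, P (u, b))
          - (∑ u : U, P (u, b)) * Real.logb 2 N := by
      intro b
      set t := ∑ u : U, P (u, b) with ht
      have ht0 : 0 ≤ t := Finset.sum_nonneg fun u _ => hP _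
      rcases eq_or_lt_of_le ht0 with h | h
      · rw [← h]; simp
      · rw [Real.logb_div one_ne_zero (ne_of_gt (mul_pos h hNpos)),
          Real.logb_mul (ne_of_gt h) (ne_of_gt hNpos)]
        simp [Real.logb_one]
        ring
    have hsum : ∑ b : B, ((1:ℝ) / N - (∑ u : U, P (u, b))) / Real.log 2 = 0 := by
      simp only [← Finset.sum_div]
      rw [Finset.sum_sub_distrib, hB, Finset.sum_const, Finset.card_univ, nsmul_eq_mul]
      rw [hN]
      field_simp
      ring
    have hineq := Finset.sum_le_sum fun b (_ : b ∈ Finset.univ) => key b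
    rw [hsum] at hineq
    rw [Finset.sum_congr rfl fun b _ => ident b] at hineq
    rw [Finset.sum_sub_distrib, ← Finset.sum_mul, hB] at hineq
    have : ∑ b : B, -(∑ u : U, P (u, b)) * Real.logb 2 (∑ u : U, P (u, b))
        = -∑ b : B, (∑ u : U, P (u, b)) * Real.logb 2 (∑ u : U, P (u, b)) := by
      rw [← Finset.sum_neg_distrib]
      apply Finset.sum_congr rfl; intro b _; ring
    rw [this] at hineq
    linarith
  linarith

lemma telescope {X Y U : Type*} [Fintype X] [Fintype Y] [Fintype U] [Nonempty U] {n : ℕ}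
    (W W' : X → Y → ℝ) (hW : IsChannel W) (hW' : IsChannel W')
    (E : U → (Fin n → X) → ℝ)
    (hE : ∀ u, (∀ xn, 0 ≤ E u xn) ∧ ∑ xn : Fin n → X, E u xn = 1)
    {ε : ℝ} (hε0 : 0 < ε) (hε : ε ≤ 1/4) (hd : ∀ x, ∑ y, |W x y - W' x y| ≤ ε) :
    |mutInf (jointOutV n (fun _ => W) E) - mutInf (jointOutV n (fun _ => W') E)| ≤
      (n : ℝ) * (2 * (ε * Real.logb 2 (Fintype.card Y) + 2 * H2 ε)) := by
  classical
  set bnd := 2 * (ε * Real.logb 2 (Fintype.card Y) + 2 * H2 ε) with hbnd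
  have hbnd0 : 0 ≤ bnd := by
    have h2 : 0 ≤ H2 ε := H2_nonneg (le_of_lt hε0) (by linarith)
    have hL : 0 ≤ Real.logb 2 (Fintype.card Y) := by
      rcases Nat.eq_zero_or_pos (Fintype.card Y) with h | h
      · rw [h]; simp
      · exact Real.logb_nonneg one_lt_two (by exact_mod_cast h)
    have : 0 ≤ ε * Real.logb 2 (Fintype.card Y) := mul_nonneg (le_of_lt hε0) hL
    rw [hbnd]; linarith
  set hyb : ℕ → Fin n → X → Y → ℝ := fun m i => if (i : ℕ) < m then W else W' with hhyb
  have hhybCh : ∀ m, ∀ i : Fin n, IsChannel (hyb m i) := by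
    intro m i
    rw [hhyb]
    -- if-then-else of channels
    by_cases h : (i : ℕ) < m
    · simpa [h] using hW
    · simpa [h] using hW'
  have claim : ∀ m : ℕ, m ≤ n →
      |mutInf (jointOutV n (hyb m) E) - mutInf (jointOutV n (hyb 0) E)| ≤ (m : ℝ) * bnd := by
    intro m
    induction m with
    | zero => intro _; simp
    | succ m ih =>
      intro hm
      have hmn : m < n := by omega
      have ihm := ih (by omega)
      set k : Fin n := ⟨m, hmn⟩ with hk
      have hstep := jointStep (hyb (m+1)) (hyb m) (hhybCh (m+1)) (hhybCh m) E hE k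
        (by
          intro i hik
          have hine : (i : ℕ) ≠ m := by
            intro h
            apply hik
            apply Fin.ext
            simpa using h
          rw [hhyb]
          by_cases h : (i : ℕ) < m
          · simp [h, Nat.lt_succ_of_lt h]
          · have : ¬ (i : ℕ) < m + 1 := by omega
            simp [h, this])
        hε0 hε
        (by
          intro x
          have h1 : hyb (m+1) k = W := by rw [hhyb]; simp [hk]
          have h2 : hyb m k = W' := by rw [hhyb]; simp [hk]
          rw [h1, h2]
          exact hd x)
      calc |mutInf (jointOutV n (hyb (m+1)) E) - mutInf (jointOutV n (hyb 0) E)|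
          ≤ |mutInf (jointOutV n (hyb (m+1)) E) - mutInf (jointOutV n (hyb m) E)| +
            |mutInf (jointOutV n (hyb m) E) - mutInf (jointOutV n (hyb 0) E)| :=
            abs_sub_le _ _ _
        _ ≤ bnd + (m : ℝ) * bnd := add_le_add hstep ihm
        _ = ((m + 1 : ℕ) : ℝ) * bnd := by push_cast; ring
  have hfin := claim n (le_refl n)
  have e1 : hyb n = fun _ : Fin n => W := by
    funext i x y
    rw [hhyb]
    simp [i.isLt]
  have e0 : hyb 0 = fun _ : Fin n => W' := by
    funext i x y
    rw [hhyb]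
    simp
  rw [e1, e0] at hfin
  exact hfin

lemma pairBound {X Y U : Type*} [Fintype X] [Fintype Y] [Fintype U] [Nonempty U] {n : ℕ}
    (W W' : X → Y → ℝ) (hW : IsChannel W) (hW' : IsChannel W')
    (E : U → (Fin n → X) → ℝ)
    (hE : ∀ u, (∀ xn, 0 ≤ E u xn) ∧ ∑ xn : Fin n → X, E u xn = 1)
    {ε : ℝ} (hε : ε ∈ Set.Ioo (0:ℝ) 1) (hd : ∀ x, ∑ y, |W x y - W' x y| ≤ ε) :
    |mutInf (jointOut n W E) - mutInf (jointOut n W' E)| ≤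
      (n : ℝ) * (4 * ε * Real.logb 2 (Fintype.card Y) + 4 * H2 ε) := by
  obtain ⟨hε0, hε1⟩ := hε
  have hL : 0 ≤ Real.logb 2 (Fintype.card Y) := by
    rcases Nat.eq_zero_or_pos (Fintype.card Y) with h | h
    · rw [h]; simp
    · exact Real.logb_nonneg one_lt_two (by exact_mod_cast h)
  have hH2 : 0 ≤ H2 ε := H2_nonneg (le_of_lt hε0) (le_of_lt hε1)
  have hjW : jointOut n W E = jointOutV n (fun _ => W) E := rfl
  have hjW' : jointOut n W' E = jointOutV n (fun _ => W') E := rfl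
  by_cases hc : ε ≤ 1/4
  · have := telescope W W' hW hW' E hE hε0 hc hd
    rw [hjW, hjW']
    calc |mutInf (jointOutV n (fun _ => W) E) - mutInf (jointOutV n (fun _ => W') E)|
        ≤ (n : ℝ) * (2 * (ε * Real.logb 2 (Fintype.card Y) + 2 * H2 ε)) := this
      _ ≤ (n : ℝ) * (4 * ε * Real.logb 2 (Fintype.card Y) + 4 * H2 ε) := by
        apply mul_le_mul_of_nonneg_left _ (Nat.cast_nonneg n)
        have : 0 ≤ ε * Real.logb 2 (Fintype.card Y) := mul_nonneg (le_of_lt hε0) hL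
        nlinarith
  · -- ε > 1/4 : use trivial bounds
    push_neg at hc
    have hm1 := jointOutV_mass (fun _ => W) (fun _ => hW) E hE
    have hm2 := jointOutV_mass (fun _ => W') (fun _ => hW') E hE
    have hn1 := jointOutV_nonneg (fun _ => W) (fun _ => hW) E hE
    have hn2 := jointOutV_nonneg (fun _ => W') (fun _ => hW') E hE
    have hI1l := mutInf_nonneg _ hn1 hm1
    have hI2l := mutInf_nonneg _ hn2 hm2
    have hI1u := mutInf_le_card _ hn1 hm1
    have hI2u := mutInf_le_card _ hn2 hm2
    have hcard : Real.logb 2 (Fintype.card (Fin n → Y)) = (n : ℝ) * Real.logb 2 (Fintype.card Y) := by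
      rw [Fintype.card_fun, Fintype.card_fin]
      push_cast
      rw [Real.logb_pow]
    rw [hcard] at hI1u hI2u
    rw [hjW, hjW', abs_le]
    constructor
    · have : (n:ℝ) * Real.logb 2 (Fintype.card Y) ≤ (n:ℝ) * (4 * ε * Real.logb 2 (Fintype.card Y) + 4 * H2 ε) := by
        apply mul_le_mul_of_nonneg_left _ (Nat.cast_nonneg n)
        nlinarith
      linarith
    · have : (n:ℝ) * Real.logb 2 (Fintype.card Y) ≤ (n:ℝ) * (4 * ε * Real.logb 2 (Fintype.card Y) + 4 * H2 ε) := by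
        apply mul_le_mul_of_nonneg_left _ (Nat.cast_nonneg n)
        nlinarith
      linarith

lemma dChan_nonneg {X Y : Type*} [Fintype Y] (W W' : X → Y → ℝ) : 0 ≤ dChan W W' :=
  Real.iSup_nonneg fun x => Finset.sum_nonneg fun y _ => abs_nonneg _

lemma dChan_le_two {X Y : Type*} [Fintype Y] (W W' : X → Y → ℝ)
    (hW : IsChannel W) (hW' : IsChannel W') : dChan W W' ≤ 2 := by
  unfold dChan
  rcases isEmpty_or_nonempty X with h | h
  · rw [Real.iSup_of_isEmpty]; norm_num
  · apply ciSup_le; intro x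
    calc ∑ y, |W x y - W' x y| ≤ ∑ y, (W x y + W' x y) := by
          apply Finset.sum_le_sum; intro y _
          calc |W x y - W' x y| ≤ |W x y| + |W' x y| := abs_sub _ _
            _ = W x y + W' x y := by
              rw [abs_of_nonneg ((hW x).1 y), abs_of_nonneg ((hW' x).1 y)]
      _ = 2 := by rw [Finset.sum_add_distrib, (hW x).2, (hW' x).2]; norm_num

lemma sum_le_dChan {X Y : Type*} [Fintype X] [Fintype Y] (W W' : X → Y → ℝ) (x : X) :
    ∑ y, |W x y - W' x y| ≤ dChan W W' := by
  unfold dChan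
  exact le_ciSup (f := fun x => ∑ y, |W x y - W' x y|) (Finite.bddAbove_range _) x

/-- continuity of the worst-case (inf) and best-case (sup) mutual information
over the uncertainty sets of two close compound channels. -/
theorem compound_mutual_information_continuity {X Y : Type*} [Fintype X] [Fintype Y]
    {S₁ S₂ : Type*} [Nonempty S₁] [Nonempty S₂]
    {ε : ℝ} (hε : ε ∈ Set.Ioo (0 : ℝ) 1)
    (W₁ : S₁ → X → Y → ℝ) (W₂ : S₂ → X → Y → ℝ)
    (hW₁ : ∀ s₁, IsChannel (W₁ s₁)) (hW₂ : ∀ s₂, IsChannel (W₂ s₂))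
    (hd₁ : (⨆ s₂ : S₂, ⨅ s₁ : S₁, dChan (W₁ s₁) (W₂ s₂)) < ε)
    (hd₂ : (⨆ s₁ : S₁, ⨅ s₂ : S₂, dChan (W₁ s₁) (W₂ s₂)) < ε)
    (n : ℕ) {U : Type*} [Fintype U] [Nonempty U]
    (E : U → (Fin n → X) → ℝ)
    (hE : ∀ u, (∀ xn, 0 ≤ E u xn) ∧ ∑ xn : Fin n → X, E u xn = 1) :
    |(⨅ s₁ : S₁, mutInf (jointOut n (W₁ s₁) E)) -
        (⨅ s₂ : S₂, mutInf (jointOut n (W₂ s₂) E))| ≤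
      (n : ℝ) * (4 * ε * Real.logb 2 (Fintype.card Y) + 4 * H2 ε) ∧
    |(⨆ s₁ : S₁, mutInf (jointOut n (W₁ s₁) E)) -
        (⨆ s₂ : S₂, mutInf (jointOut n (W₂ s₂) E))| ≤
      (n : ℝ) * (4 * ε * Real.logb 2 (Fintype.card Y) + 4 * H2 ε) := by
  obtain ⟨hε0, hε1⟩ := hε
  set L := Real.logb 2 (Fintype.card Y) with hL
  set Bd := (n : ℝ) * (4 * ε * L + 4 * H2 ε) with hBd
  set f₁ : S₁ → ℝ := fun s₁ => mutInf (jointOut n (W₁ s₁) E) with hf₁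
  set f₂ : S₂ → ℝ := fun s₂ => mutInf (jointOut n (W₂ s₂) E) with hf₂
  have hpair : ∀ s₁ s₂, dChan (W₁ s₁) (W₂ s₂) < ε → |f₁ s₁ - f₂ s₂| ≤ Bd := by
    intro s₁ s₂ h
    exact pairBound (W₁ s₁) (W₂ s₂) (hW₁ s₁) (hW₂ s₂) E hE ⟨hε0, hε1⟩
      (fun x => le_of_lt (lt_of_le_of_lt (sum_le_dChan _ _ x) h))
  have hsel₁ : ∀ s₂, ∃ s₁, dChan (W₁ s₁) (W₂ s₂) < ε := by
    intro s₂
    have hb : BddAbove (Set.range fun s₂' : S₂ => ⨅ s₁ : S₁, dChan (W₁ s₁) (W₂ s₂')) := by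
      refine ⟨2, ?_⟩
      rintro _ ⟨s₂', rfl⟩
      exact ciInf_le_of_le ⟨0, by rintro _ ⟨s₁', rfl⟩; exact dChan_nonneg _ _⟩
        (Classical.arbitrary S₁) (dChan_le_two _ _ (hW₁ _) (hW₂ _))
    exact exists_lt_of_ciInf_lt (lt_of_le_of_lt (le_ciSup hb s₂) hd₁)
  have hsel₂ : ∀ s₁, ∃ s₂, dChan (W₁ s₁) (W₂ s₂) < ε := by
    intro s₁
    have hb : BddAbove (Set.range fun s₁' : S₁ => ⨅ s₂ : S₂, dChan (W₁ s₁') (W₂ s₂)) := by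
      refine ⟨2, ?_⟩
      rintro _ ⟨s₁', rfl⟩
      exact ciInf_le_of_le ⟨0, by rintro _ ⟨s₂', rfl⟩; exact dChan_nonneg _ _⟩
        (Classical.arbitrary S₂) (dChan_le_two _ _ (hW₁ _) (hW₂ _))
    exact exists_lt_of_ciInf_lt (lt_of_le_of_lt (le_ciSup hb s₁) hd₂)
  have hb₁ : ∀ s₁, f₁ s₁ ∈ Set.Icc (0:ℝ) ((n:ℝ) * L) := by
    intro s₁
    have hm := jointOutV_mass (fun _ => W₁ s₁) (fun _ => hW₁ s₁) E hE
    have hn := jointOutV_nonneg (fun _ => W₁ s₁) (fun _ => hW₁ s₁) E hE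
    have hcard : Real.logb 2 (Fintype.card (Fin n → Y)) = (n : ℝ) * L := by
      rw [hL, Fintype.card_fun, Fintype.card_fin]; push_cast; rw [Real.logb_pow]
    exact ⟨mutInf_nonneg _ hn hm, hcard ▸ mutInf_le_card _ hn hm⟩
  have hb₂ : ∀ s₂, f₂ s₂ ∈ Set.Icc (0:ℝ) ((n:ℝ) * L) := by
    intro s₂
    have hm := jointOutV_mass (fun _ => W₂ s₂) (fun _ => hW₂ s₂) E hE
    have hn := jointOutV_nonneg (fun _ => W₂ s₂) (fun _ => hW₂ s₂) E hE
    have hcard : Real.logb 2 (Fintype.card (Fin n → Y)) = (n : ℝ) * L := by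
      rw [hL, Fintype.card_fun, Fintype.card_fin]; push_cast; rw [Real.logb_pow]
    exact ⟨mutInf_nonneg _ hn hm, hcard ▸ mutInf_le_card _ hn hm⟩
  have hbb₁ : BddBelow (Set.range f₁) := ⟨0, by rintro _ ⟨s, rfl⟩; exact (hb₁ s).1⟩
  have hbb₂ : BddBelow (Set.range f₂) := ⟨0, by rintro _ ⟨s, rfl⟩; exact (hb₂ s).1⟩
  have hba₁ : BddAbove (Set.range f₁) := ⟨(n:ℝ) * L, by rintro _ ⟨s, rfl⟩; exact (hb₁ s).2⟩
  have hba₂ : BddAbove (Set.range f₂) := ⟨(n:ℝ) * L, by rintro _ ⟨s, rfl⟩; exact (hb₂ s).2⟩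
  constructor
  · rw [abs_sub_le_iff]
    constructor
    · have h : (⨅ s₁, f₁ s₁) - Bd ≤ ⨅ s₂, f₂ s₂ := by
        apply le_ciInf
        intro s₂
        obtain ⟨s₁, hs⟩ := hsel₁ s₂
        have h1 := ciInf_le hbb₁ s₁
        have h2 := abs_sub_le_iff.mp (hpair s₁ s₂ hs)
        linarith [h2.1]
      linarith
    · have h : (⨅ s₂, f₂ s₂) - Bd ≤ ⨅ s₁, f₁ s₁ := by
        apply le_ciInf
        intro s₁
        obtain ⟨s₂, hs⟩ := hsel₂ s₁
        have h1 := ciInf_le hbb₂ s₂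
        have h2 := abs_sub_le_iff.mp (hpair s₁ s₂ hs)
        linarith [h2.2]
      linarith
  · rw [abs_sub_le_iff]
    constructor
    · have h : (⨆ s₁, f₁ s₁) ≤ (⨆ s₂, f₂ s₂) + Bd := by
        apply ciSup_le
        intro s₁
        obtain ⟨s₂, hs⟩ := hsel₂ s₁
        have h1 := le_ciSup hba₂ s₂
        have h2 := abs_sub_le_iff.mp (hpair s₁ s₂ hs)
        linarith [h2.1]
      linarith
    · have h : (⨆ s₂, f₂ s₂) ≤ (⨆ s₁, f₁ s₁) + Bd := by
        apply ciSup_le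
        intro s₂
        obtain ⟨s₁, hs⟩ := hsel₁ s₂
        have h1 := le_ciSup hba₁ s₁
        have h2 := abs_sub_le_iff.mp (hpair s₁ s₂ hs)
        linarith [h2.2]
      linarith
end
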